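/- arXiv:1006.2145 — 12 statements merged into one kernel-verified Lean document; each statement's English description precedes it below -/
import Mathlib

section
/- Let A, B be invertible 2×2 complex matrices with AB = BA, X, Y 2×2 matrices with Π₁(X,Y) invertible, where Π₁(X,Y) = f₂(X;A)(YA+BX) − f₁(X;A)AB and Π₂(X,Y) = f₂(X;A)YX − f₀(X;A)AB. Define U = Π₂(X,Y)Π₁(X,Y)⁻¹A and V = A⁻¹(YA + BX − UB). Then (U − ζA)(V − ζB) = (Y − ζB)(X − ζA) for all ζ ∈ ℂ. -/
open Matrix

/-- `f₁(X;A) = a₂₂x₁₁ − a₂₁x₁₂ − a₁₂x₂₁ + a₁₁x₂₂`. -/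
def f1 (X A : Matrix (Fin 2) (Fin 2) ℂ) : ℂ :=
  A 1 1 * X 0 0 - A 1 0 * X 0 1 - A 0 1 * X 1 0 + A 0 0 * X 1 1

private lemma ch2 (g : Matrix (Fin 2) (Fin 2) ℂ) :
    g * g - g.trace • g + g.det • (1 : Matrix (Fin 2) (Fin 2) ℂ) = 0 := by
  ext i j
  fin_cases i <;> fin_cases j <;>
    simp [Matrix.mul_apply, Fin.sum_univ_two, Matrix.trace_fin_two, Matrix.det_fin_two,
      Matrix.one_apply] <;> ring

private lemma tradj (X A : Matrix (Fin 2) (Fin 2) ℂ) :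
    (X * A.adjugate).trace = f1 X A := by
  simp [Matrix.trace_fin_two, Matrix.mul_apply, Fin.sum_univ_two, Matrix.adjugate_fin_two, f1]
  ring

theorem stmt1 (A B X Y : Matrix (Fin 2) (Fin 2) ℂ)
    (hA : IsUnit A) (hB : IsUnit B) (hAB : A * B = B * A)
    (hP : IsUnit (A.det • (Y * A + B * X) - f1 X A • (A * B))) :
    ∀ ζ : ℂ,
      let P1 := A.det • (Y * A + B * X) - f1 X A • (A * B)
      let P2 := A.det • (Y * X) - X.det • (A * B)
      let U := P2 * P1⁻¹ * A
      let V := A⁻¹ * (Y * A + B * X - U * B)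
      (U - ζ • A) * (V - ζ • B) = (Y - ζ • B) * (X - ζ • A) := by
  intro ζ P1 P2 U V
  have hP1d : P1 = A.det • (Y * A + B * X) - f1 X A • (A * B) := rfl
  have hP2d : P2 = A.det • (Y * X) - X.det • (A * B) := rfl
  have hUd : U = P2 * P1⁻¹ * A := rfl
  have hVd : V = A⁻¹ * (Y * A + B * X - U * B) := rfl
  clear_value P1 P2 U V
  have hdA : IsUnit A.det := (Matrix.isUnit_iff_isUnit_det A).mp hA
  have hdB : IsUnit B.det := (Matrix.isUnit_iff_isUnit_det B).mp hB
  have hdP : IsUnit P1.det := (Matrix.isUnit_iff_isUnit_det P1).mp (hP1d ▸ hP)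
  have hA1 : A * A⁻¹ = 1 := Matrix.mul_nonsing_inv A hdA
  have hA2 : A⁻¹ * A = 1 := Matrix.nonsing_inv_mul A hdA
  have hB1 : B * B⁻¹ = 1 := Matrix.mul_nonsing_inv B hdB
  have hB2 : B⁻¹ * B = 1 := Matrix.nonsing_inv_mul B hdB
  obtain ⟨W, hWdef⟩ : ∃ M, M = P1⁻¹ := ⟨_, rfl⟩
  rw [← hWdef] at hUd
  have hW1 : P1 * W = 1 := by rw [hWdef]; exact Matrix.mul_nonsing_inv P1 hdP
  have hW2 : W * P1 = 1 := by rw [hWdef]; exact Matrix.nonsing_inv_mul P1 hdP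
  have cA : ∀ M : Matrix (Fin 2) (Fin 2) ℂ, A * (A⁻¹ * M) = M := fun M => by
    rw [← mul_assoc, hA1, one_mul]
  have cA' : ∀ M : Matrix (Fin 2) (Fin 2) ℂ, A⁻¹ * (A * M) = M := fun M => by
    rw [← mul_assoc, hA2, one_mul]
  have cB : ∀ M : Matrix (Fin 2) (Fin 2) ℂ, B * (B⁻¹ * M) = M := fun M => by
    rw [← mul_assoc, hB1, one_mul]
  have cB' : ∀ M : Matrix (Fin 2) (Fin 2) ℂ, B⁻¹ * (B * M) = M := fun M => by
    rw [← mul_assoc, hB2, one_mul]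
  obtain ⟨X', hX'⟩ : ∃ M, M = X * A⁻¹ := ⟨_, rfl⟩
  obtain ⟨Y', hY'⟩ : ∃ M, M = B⁻¹ * Y := ⟨_, rfl⟩
  have hXrec : X' * A = X := by rw [hX', mul_assoc, hA2, mul_one]
  have hYrec : B * Y' = Y := by rw [hY', ← mul_assoc, hB1, one_mul]
  obtain ⟨t, ht⟩ : ∃ c : ℂ, c = X'.trace := ⟨_, rfl⟩
  obtain ⟨M1, hM1⟩ : ∃ M, M = Y' + X' - t • (1 : Matrix (Fin 2) (Fin 2) ℂ) := ⟨_, rfl⟩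
  obtain ⟨iM, hiMdef⟩ : ∃ M, M = A.det • (A * (W * B)) := ⟨_, rfl⟩
  -- f1 X A = A.det * t
  have hf1 : f1 X A = A.det * t := by
    have h1 : X' = Ring.inverse A.det • (X * A.adjugate) := by
      rw [hX', Matrix.inv_def, Matrix.mul_smul]
    rw [ht, h1, Matrix.trace_smul, smul_eq_mul, ← mul_assoc,
      Ring.mul_inverse_cancel _ hdA, one_mul, tradj]
  -- conjugated form of Y*A + B*X
  have hS : Y * A + B * X = B * (Y' + X') * A := by
    rw [mul_add, add_mul, mul_assoc B X' A, hXrec, hYrec]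
  -- E1
  have hE1 : P1 = A.det • (B * M1 * A) := by
    have hBM1A : B * M1 * A = Y * A + B * X - t • (B * A) := by
      rw [hM1, mul_sub, sub_mul, hS, mul_smul_comm, mul_one, smul_mul_assoc]
    rw [hBM1A, smul_sub, smul_smul, ← hf1, ← hAB]
    exact hP1d
  -- Cayley–Hamilton consequences
  have hCH : t • X' - X' * X' = X'.det • (1 : Matrix (Fin 2) (Fin 2) ℂ) := by
    calc t • X' - X' * X'
        = -(X' * X' - X'.trace • X' + X'.det • 1) + X'.det • 1 := by rw [ht]; abel
      _ = X'.det • 1 := by rw [ch2 X', neg_zero, zero_add]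
  have hm2 : M1 * X' = Y' * X' - X'.det • 1 := by
    rw [hM1, sub_mul, add_mul, smul_mul_assoc, one_mul]
    have hsub : X' * X' - t • X' = -(X'.det • (1 : Matrix (Fin 2) (Fin 2) ℂ)) := by
      rw [eq_neg_iff_add_eq_zero, ht]; exact ch2 X'
    rw [add_sub_assoc, hsub]
    abel
  -- E2
  have hdetX : X.det = X'.det * A.det := by rw [← hXrec, Matrix.det_mul]
  have hYX : B * (Y' * X') * A = Y * X := by
    rw [← mul_assoc, hYrec, mul_assoc, hXrec]
  have hE2 : P2 = A.det • (B * (M1 * X') * A) := by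
    rw [hm2, mul_sub, sub_mul, hYX, mul_smul_comm, mul_one, smul_mul_assoc, smul_sub,
      smul_smul, mul_comm A.det X'.det, ← hdetX, ← hAB]
    exact hP2d
  -- iM is a two-sided inverse of M1
  have hiM1 : M1 * iM = 1 := by
    have h : A.det • (B * (M1 * (A * W))) = 1 := by
      rw [← hW1, hE1]
      simp only [smul_mul_assoc, mul_assoc]
    have h' : A.det • (B * (M1 * (A * (W * B)))) = B := by
      have h2 := congrArg (· * B) h
      simpa only [smul_mul_assoc, mul_assoc, one_mul] using h2
    calc M1 * iM = A.det • (M1 * (A * (W * B))) := by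
          rw [hiMdef, mul_smul_comm]
      _ = B⁻¹ * (A.det • (B * (M1 * (A * (W * B))))) := by
          rw [mul_smul_comm, cB']
      _ = B⁻¹ * B := by rw [h']
      _ = 1 := hB2
  have hiM2 : iM * M1 = 1 := by
    have h : A.det • (W * (B * (M1 * A))) = 1 := by
      rw [← hW2, hE1]
      simp only [mul_smul_comm, mul_assoc]
    have h' := congrArg (fun M => A * M * A⁻¹) h
    simp only [mul_smul_comm, smul_mul_assoc, mul_assoc, mul_one, one_mul, hA1] at h'
    rw [hiMdef]
    simpa only [smul_mul_assoc, mul_assoc] using h'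
  have cM : ∀ M : Matrix (Fin 2) (Fin 2) ℂ, M1 * (iM * M) = M := fun M => by
    rw [← mul_assoc, hiM1, one_mul]
  have cM' : ∀ M : Matrix (Fin 2) (Fin 2) ℂ, iM * (M1 * M) = M := fun M => by
    rw [← mul_assoc, hiM2, one_mul]
  -- T = P2 * W in conjugated form
  obtain ⟨N, hNdef⟩ : ∃ M, M = M1 * (X' * iM) := ⟨_, rfl⟩
  have hT : P2 * W = B * N * B⁻¹ := by
    rw [hE2, hNdef, hiMdef]
    simp only [smul_mul_assoc, mul_smul_comm, mul_assoc, hB1, mul_one]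
  -- N identities
  have hNa : N * M1 = M1 * X' := by
    rw [hNdef]; simp only [mul_assoc]; rw [hiM2, mul_one]
  have hNb : N * N = M1 * (X' * (X' * iM)) := by
    rw [hNdef]
    simp only [mul_assoc]
    rw [cM']
  have hsum : Y' + X' = M1 + t • 1 := by rw [hM1]; abel
  have hNc : N * (Y' + X') = M1 * X' + t • N := by
    rw [hsum, mul_add, hNa, mul_smul_comm, mul_one]
  have hN : N * (Y' + X') - N * N = Y' * X' := by
    rw [hNc, hNb]
    have h1 : t • N - M1 * (X' * (X' * iM)) = M1 * ((t • X' - X' * X') * iM) := by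
      rw [hNdef]
      simp only [sub_mul, smul_mul_assoc, mul_sub, mul_smul_comm, mul_assoc]
    rw [add_sub_assoc, h1, hCH, smul_mul_assoc, one_mul, mul_smul_comm, hiM1, hm2]
    abel
  -- key products
  have hAV : A * V = Y * A + B * X - U * B := by rw [hVd]; exact cA _
  have hUB : U * B = B * N * A := by
    calc U * B = (P2 * W) * (A * B) := by rw [hUd, mul_assoc]
      _ = (B * N * B⁻¹) * (B * A) := by rw [hT, hAB]
      _ = B * N * A := by simp only [mul_assoc, cB']
  have hUV : U * V = Y * X := by
    calc U * V = (P2 * W) * (A * V) := by rw [hUd, mul_assoc]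
      _ = (B * N * B⁻¹) * (B * (Y' + X') * A) - (B * N * B⁻¹) * (B * N * A) := by
          rw [hT, hAV, hS, hUB, mul_sub]
      _ = B * (N * (Y' + X')) * A - B * (N * N) * A := by
          simp only [mul_assoc, cB']
      _ = B * (N * (Y' + X') - N * N) * A := by
          rw [mul_sub, sub_mul]
      _ = Y * X := by rw [hN, hYX]
  -- final expansion
  have expand : ∀ (P Q R S : Matrix (Fin 2) (Fin 2) ℂ),
      (P - ζ • Q) * (R - ζ • S) = P * R - ζ • (P * S) - ζ • (Q * R) + (ζ * ζ) • (Q * S) := by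
    intro P Q R S
    simp only [sub_mul, mul_sub, smul_mul_assoc, mul_smul_comm, smul_smul]
    module
  rw [expand U A V B, expand Y B X A, hUV, hAV, ← hAB]
  simp only [smul_sub, smul_add]
  abel
end

section
/- With the same hypotheses and U = Π₂(X,Y)Π₁(X,Y)⁻¹A, the characteristic-type polynomials coincide: det(U − ζA) = det(X − ζA) for all ζ ∈ ℂ. Equivalently fᵢ(U;A) = fᵢ(X;A) for i = 0,1,2. -/
open Matrix

/-- Generalized Cayley–Hamilton-type identity for 2×2 matrices:
`X·adj(A)·X = f₁(X;A)·X − det(X)·A`. -/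
lemma key_quad' (X A : Matrix (Fin 2) (Fin 2) ℂ) :
    X * A.adjugate * X =
      (A 1 1 * X 0 0 - A 1 0 * X 0 1 - A 0 1 * X 1 0 + A 0 0 * X 1 1) • X - X.det • A := by
  ext i j
  fin_cases i <;> fin_cases j <;>
    simp [Matrix.mul_apply, Matrix.adjugate_fin_two, Matrix.det_fin_two,
      Fin.sum_univ_two] <;> ring

lemma key_quad (X A : Matrix (Fin 2) (Fin 2) ℂ) :
    X * A.adjugate * X = f1 X A • X - X.det • A :=
  key_quad' X A

theorem stmt2 (A B X Y : Matrix (Fin 2) (Fin 2) ℂ)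
    (hA : IsUnit A) (hB : IsUnit B) (hAB : A * B = B * A)
    (hP : IsUnit (A.det • (Y * A + B * X) - f1 X A • (A * B))) :
    ∀ ζ : ℂ,
      let P1 := A.det • (Y * A + B * X) - f1 X A • (A * B)
      let P2 := A.det • (Y * X) - X.det • (A * B)
      let U := P2 * P1⁻¹ * A
      (U - ζ • A).det = (X - ζ • A).det := by
  intro ζ P1 P2 U
  have hAd : A.det ≠ 0 := by
    simpa [isUnit_iff_ne_zero] using hA.map (Matrix.detMonoidHom (n := Fin 2) (R := ℂ))
  have hP' : IsUnit P1 := hP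
  have hPd : P1.det ≠ 0 := ((Matrix.isUnit_iff_isUnit_det P1).mp hP').ne_zero
  have h3 : A * B * A.adjugate = A.det • B := by
    rw [hAB, Matrix.mul_assoc, Matrix.mul_adjugate, Matrix.mul_smul, Matrix.mul_one]
  have key : P1 * A.adjugate * X = A.det • P2 := by
    show (A.det • (Y * A + B * X) - f1 X A • (A * B)) * A.adjugate * X
        = A.det • (A.det • (Y * X) - X.det • (A * B))
    have e1 : (Y * A + B * X) * A.adjugate * X
        = A.det • (Y * X) + (f1 X A • (B * X) - X.det • (A * B)) := by
      rw [Matrix.add_mul, Matrix.add_mul]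
      have eYA : Y * A * A.adjugate * X = A.det • (Y * X) := by
        rw [Matrix.mul_assoc Y A, Matrix.mul_adjugate, Matrix.mul_smul, Matrix.mul_one,
          Matrix.smul_mul]
      have eBX : B * X * A.adjugate * X = f1 X A • (B * X) - X.det • (A * B) := by
        rw [Matrix.mul_assoc, Matrix.mul_assoc, ← Matrix.mul_assoc X, key_quad,
          Matrix.mul_sub, Matrix.mul_smul, Matrix.mul_smul, hAB]
      rw [eYA, eBX]
    rw [Matrix.sub_mul, Matrix.sub_mul, Matrix.smul_mul, Matrix.smul_mul, Matrix.smul_mul,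
      Matrix.smul_mul, e1, h3, Matrix.smul_mul]
    rw [smul_add, smul_sub, smul_sub, smul_comm (f1 X A) A.det]
    abel
  have hX : P2 = P1 * A⁻¹ * X := by
    rw [Matrix.inv_def, Matrix.mul_smul, Matrix.smul_mul, key,
      Ring.inverse_eq_inv, inv_smul_smul₀ hAd]
  have hUdef : U = P2 * P1⁻¹ * A := rfl
  clear_value U
  clear_value P2
  clear_value P1
  have hU : U - ζ • A = P1 * A⁻¹ * (X - ζ • A) * P1⁻¹ * A := by
    rw [hUdef, hX, Matrix.mul_sub (P1 * A⁻¹), Matrix.mul_smul, Matrix.mul_assoc P1 A⁻¹ A,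
      Matrix.nonsing_inv_mul A (isUnit_iff_ne_zero.mpr hAd), Matrix.mul_one, Matrix.sub_mul,
      Matrix.sub_mul, Matrix.smul_mul, Matrix.smul_mul,
      Matrix.mul_nonsing_inv P1 (isUnit_iff_ne_zero.mpr hPd), Matrix.one_mul]
  rw [hU, Matrix.det_mul, Matrix.det_mul, Matrix.det_mul, Matrix.det_mul,
    Matrix.det_nonsing_inv, Matrix.det_nonsing_inv, Ring.inverse_eq_inv, Ring.inverse_eq_inv]
  field_simp
end

section
/- Conversely, suppose 2×2 matrices U, V satisfy (U − ζA)(V − ζB) = (Y − ζB)(X − ζA) for all ζ and det(U − ζA) = det(X − ζA) for all ζ (with A, B invertible, AB = BA, and Π₁(X,Y) invertible). Then U = Π₂(X,Y)Π₁(X,Y)⁻¹A and V = A⁻¹(YA + BX − UB). -/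
open Matrix

theorem stmt3 (A B X Y U V : Matrix (Fin 2) (Fin 2) ℂ)
    (hA : IsUnit A) (hB : IsUnit B) (hAB : A * B = B * A)
    (hP : IsUnit (A.det • (Y * A + B * X) - f1 X A • (A * B)))
    (hfact : ∀ ζ : ℂ, (U - ζ • A) * (V - ζ • B) = (Y - ζ • B) * (X - ζ • A))
    (hdet : ∀ ζ : ℂ, (U - ζ • A).det = (X - ζ • A).det) :
    U = (A.det • (Y * X) - X.det • (A * B)) *
          (A.det • (Y * A + B * X) - f1 X A • (A * B))⁻¹ * A ∧
    V = A⁻¹ * (Y * A + B * X - U * B) := by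
  have hAd : IsUnit A.det := (isUnit_iff_isUnit_det A).mp hA
  have h0 := hfact 0
  simp only [zero_smul, sub_zero] at h0
  have h1 := hfact 1
  simp only [one_smul] at h1
  have hlin : U * B + A * V = Y * A + B * X := by
    have e : Y * X - (U * B + A * V) + B * A = Y * X - (Y * A + B * X) + B * A := by
      calc Y * X - (U * B + A * V) + B * A
          = U * V - (U * B + A * V) + A * B := by rw [h0, hAB]
        _ = (U - A) * (V - B) := by noncomm_ring
        _ = (Y - B) * (X - A) := h1
        _ = Y * X - (Y * A + B * X) + B * A := by noncomm_ring
    exact sub_right_injective (add_right_cancel e)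
  have hd0 := hdet 0
  simp only [zero_smul, sub_zero] at hd0
  have hd1 := hdet 1
  simp only [one_smul] at hd1
  have eU : (U - A).det = U.det - f1 U A + A.det := by
    simp [det_fin_two, f1, Matrix.sub_apply]; ring
  have eX : (X - A).det = X.det - f1 X A + A.det := by
    simp [det_fin_two, f1, Matrix.sub_apply]; ring
  have hf1 : f1 U A = f1 X A := by
    rw [eU, eX] at hd1
    linear_combination hd0 - hd1
  have hCH : U * adjugate A * U = f1 U A • U - U.det • A := by
    ext i j
    fin_cases i <;> fin_cases j <;>
      simp [adjugate_fin_two, mul_apply, Fin.sum_univ_two, det_fin_two, f1,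
        Matrix.sub_apply, Matrix.smul_apply] <;> ring
  have hkey : U * adjugate A * (Y * A + B * X)
      = A.det • (Y * X) + f1 X A • (U * B) - X.det • (A * B) := by
    rw [← hlin, mul_add, ← mul_assoc, hCH,
      ← mul_assoc (U * adjugate A) A V, mul_assoc U (adjugate A) A, adjugate_mul]
    rw [← h0, hf1, hd0]
    simp only [smul_mul_assoc, mul_smul_comm, one_mul, smul_sub, sub_mul]
    noncomm_ring
  have hadj : A.det • A⁻¹ = adjugate A := by
    rw [Matrix.inv_def, smul_smul, mul_comm, Ring.inverse_mul_cancel _ hAd, one_smul]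
  have hW : (U * A⁻¹) * (A.det • (Y * A + B * X) - f1 X A • (A * B))
      = A.det • (Y * X) - X.det • (A * B) := by
    rw [mul_sub, mul_smul_comm, mul_smul_comm, ← mul_assoc (U * A⁻¹) A B,
      mul_assoc U A⁻¹ A, nonsing_inv_mul A hAd, mul_one]
    have : A.det • (U * A⁻¹ * (Y * A + B * X)) = U * adjugate A * (Y * A + B * X) := by
      rw [← hadj]
      simp only [Matrix.mul_smul, Matrix.smul_mul]
    rw [this, hkey]
    abel
  have hPd : IsUnit (A.det • (Y * A + B * X) - f1 X A • (A * B)).det :=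
    (isUnit_iff_isUnit_det _).mp hP
  constructor
  · rw [← hW, mul_assoc (U * A⁻¹), Matrix.mul_nonsing_inv _ hPd, mul_one,
      mul_assoc, nonsing_inv_mul A hAd, mul_one]
  · have : Y * A + B * X - U * B = A * V := by rw [← hlin]; abel
    rw [this, ← mul_assoc, nonsing_inv_mul A hAd, one_mul]
end

section
/- Let L, M be matrix-valued functions of a variable x, a parameter α, and spectral parameter ζ, forming a Lax pair for a parametric map S: whenever (u,v) = S_{α,β}(x,y) one has L(u;α,ζ)M(v;β,ζ) = M(y;β,ζ)L(x;α,ζ) for all ζ. Define the monodromy matrix Mₙ(x₁,…,xₙ,y₁,…,yₙ) = ∏_{i=n}^{1} M(yᵢ;βᵢ)L(xᵢ;αᵢ) (ordered right to left) and the transfer map Tₙ: (x₁,…,xₙ,y₁,…,yₙ) ↦ (x₁′,…,xₙ′,y₂′,…,yₙ′,y₁′) where (xᵢ′,yᵢ′) = S_{αᵢ,βᵢ}(xᵢ,yᵢ). Then Mₙ(Tₙ(x,y)) = M(y₁′;β₁) Mₙ(x,y) M(y₁′;β₁)⁻¹; in particular the transfer map preserves the spectrum of the monodromy matrix. -/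
open Matrix

lemma stmt4_key_aux {R : Type*} [Monoid R] (n : ℕ) (f g : ℕ → R) :
    (List.ofFn (fun i : Fin n => f (i + 1) * g i)).reverse.prod * f 0
      = f n * (List.ofFn (fun i : Fin n => g i * f i)).reverse.prod := by
  induction n with
  | zero => simp
  | succ n ih =>
      rw [List.ofFn_succ', List.ofFn_succ']
      simp only [List.concat_eq_append, List.reverse_append, List.reverse_singleton,
        List.prod_append, List.prod_cons, List.prod_nil, List.singleton_append,
        List.prod_cons]
      simp only [Fin.val_last, Fin.coe_castSucc, mul_one]
      rw [mul_assoc, mul_assoc, ih, ← mul_assoc, ← mul_assoc, mul_assoc (f (n+1)),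
        mul_assoc]

/-- Proposition 1: the transfer map of the n-periodic `staircase' initial value
problem conjugates the monodromy matrix by `M(y₁';β₁)`; in particular it
preserves its spectrum.  Position `i` of the transfer image carries the
x-value `x'ᵢ` (with parameter `αᵢ`) and the y-value `y'ᵢ₊₁` (which travels with
its parameter `βᵢ₊₁`), indices understood mod `n`. -/
theorem stmt4 {𝒳 : Type*} {m k n : ℕ} [NeZero n]
    (L M : 𝒳 → (Fin m → ℂ) → ℂ → Matrix (Fin k) (Fin k) ℂ)
    (S : (Fin m → ℂ) → (Fin m → ℂ) → 𝒳 × 𝒳 → 𝒳 × 𝒳)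
    (hLax : ∀ a b x y ζ,
      L (S a b (x, y)).1 a ζ * M (S a b (x, y)).2 b ζ = M y b ζ * L x a ζ)
    (hM : ∀ p a ζ, IsUnit (M p a ζ))
    (x y : Fin n → 𝒳) (α β : Fin n → (Fin m → ℂ)) (ζ : ℂ) :
    (List.ofFn (fun i : Fin n =>
        M (S (α (i + 1)) (β (i + 1)) (x (i + 1), y (i + 1))).2 (β (i + 1)) ζ *
          L (S (α i) (β i) (x i, y i)).1 (α i) ζ)).reverse.prod =
      M (S (α 0) (β 0) (x 0, y 0)).2 (β 0) ζ *
        (List.ofFn (fun i : Fin n => M (y i) (β i) ζ * L (x i) (α i) ζ)).reverse.prod *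
        (M (S (α 0) (β 0) (x 0, y 0)).2 (β 0) ζ)⁻¹ := by
  open Fin.NatCast in
  set f : ℕ → Matrix (Fin k) (Fin k) ℂ := fun i =>
    M (S (α (i : Fin n)) (β (i : Fin n)) (x (i : Fin n), y (i : Fin n))).2 (β (i : Fin n)) ζ
    with hf
  open Fin.NatCast in
  set g : ℕ → Matrix (Fin k) (Fin k) ℂ := fun i =>
    L (S (α (i : Fin n)) (β (i : Fin n)) (x (i : Fin n), y (i : Fin n))).1 (α (i : Fin n)) ζ
    with hg
  have h1 : ∀ i : Fin n,
      M (S (α (i + 1)) (β (i + 1)) (x (i + 1), y (i + 1))).2 (β (i + 1)) ζ *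
          L (S (α i) (β i) (x i, y i)).1 (α i) ζ = f ((i : ℕ) + 1) * g (i : ℕ) := by
    intro i
    simp [hf, hg, Fin.cast_val_eq_self]
  have h2 : ∀ i : Fin n,
      M (y i) (β i) ζ * L (x i) (α i) ζ = g (i : ℕ) * f (i : ℕ) := by
    intro i
    simp only [hf, hg, Fin.cast_val_eq_self]
    exact (hLax (α i) (β i) (x i) (y i) ζ).symm
  have key := stmt4_key_aux n f g
  have hfn : f n = f 0 := by
    simp [hf, Fin.natCast_self]
  simp only [h1, h2]
  have hdet : IsUnit (f 0).det :=
    (Matrix.isUnit_iff_isUnit_det _).mp (hM _ _ _)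
  rw [hfn] at key
  have : f 0 = M (S (α 0) (β 0) (x 0, y 0)).2 (β 0) ζ := by
    simp [hf]
  rw [← this, ← key, Matrix.mul_nonsing_inv_cancel_right _ _ hdet]
end

section
/- Let S, R, T be parametric maps on 𝒳×𝒳 admitting a Lax triple (L₁, L₂, L₃): the pairs (L₁,L₂), (L₁,L₃), (L₂,L₃) are Lax pairs for S, R, T respectively. If the equation L₁(x̂;α)L₂(ŷ;β)L₃(ẑ;γ) = L₁(x;α)L₂(y;β)L₃(z;γ) (as matrix identities for all ζ) implies x̂ = x, ŷ = y, ẑ = z, then S, R, T satisfy the entwining Yang–Baxter equation T²³_{β,γ} ∘ R¹³_{α,γ} ∘ S¹²_{α,β} = S¹²_{α,β} ∘ R¹³_{α,γ} ∘ T²³_{β,γ} on 𝒳×𝒳×𝒳. -/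
open Matrix

variable {𝒳 : Type*}

/-- Action of a map on the factors 1,2 of `𝒳 × 𝒳 × 𝒳`. -/
def act12 (f : 𝒳 × 𝒳 → 𝒳 × 𝒳) : 𝒳 × 𝒳 × 𝒳 → 𝒳 × 𝒳 × 𝒳 :=
  fun p => ((f (p.1, p.2.1)).1, (f (p.1, p.2.1)).2, p.2.2)

/-- Action of a map on the factors 1,3 of `𝒳 × 𝒳 × 𝒳`. -/
def act13 (f : 𝒳 × 𝒳 → 𝒳 × 𝒳) : 𝒳 × 𝒳 × 𝒳 → 𝒳 × 𝒳 × 𝒳 :=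
  fun p => ((f (p.1, p.2.2)).1, p.2.1, (f (p.1, p.2.2)).2)

/-- Action of a map on the factors 2,3 of `𝒳 × 𝒳 × 𝒳`. -/
def act23 (f : 𝒳 × 𝒳 → 𝒳 × 𝒳) : 𝒳 × 𝒳 × 𝒳 → 𝒳 × 𝒳 × 𝒳 :=
  fun p => (p.1, f p.2)

theorem stmt5 {𝒳 P : Type*} {k : ℕ}
    (L₁ L₂ L₃ : 𝒳 → P → ℂ → Matrix (Fin k) (Fin k) ℂ)
    (S R T : P → P → 𝒳 × 𝒳 → 𝒳 × 𝒳)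
    (hS : ∀ a b x y ζ,
      L₁ (S a b (x, y)).1 a ζ * L₂ (S a b (x, y)).2 b ζ = L₂ y b ζ * L₁ x a ζ)
    (hR : ∀ a c x z ζ,
      L₁ (R a c (x, z)).1 a ζ * L₃ (R a c (x, z)).2 c ζ = L₃ z c ζ * L₁ x a ζ)
    (hT : ∀ b c y z ζ,
      L₂ (T b c (y, z)).1 b ζ * L₃ (T b c (y, z)).2 c ζ = L₃ z c ζ * L₂ y b ζ)
    (huniq : ∀ a b c x y z x' y' z',
      (∀ ζ : ℂ, L₁ x' a ζ * L₂ y' b ζ * L₃ z' c ζ = L₁ x a ζ * L₂ y b ζ * L₃ z c ζ) →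
      x' = x ∧ y' = y ∧ z' = z)
    (a b c : P) :
    act23 (T b c) ∘ act13 (R a c) ∘ act12 (S a b) =
      act12 (S a b) ∘ act13 (R a c) ∘ act23 (T b c) := by
  funext p
  obtain ⟨x, y, z⟩ := p
  -- LHS intermediates
  rcases hSxy : S a b (x, y) with ⟨x₁, y₁⟩
  rcases hRxz : R a c (x₁, z) with ⟨x₂, z₁⟩
  rcases hTyz : T b c (y₁, z₁) with ⟨y₂, z₂⟩
  -- RHS intermediates
  rcases hT' : T b c (y, z) with ⟨y₁', z₁'⟩
  rcases hR' : R a c (x, z₁') with ⟨x₁', z₂'⟩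
  rcases hS' : S a b (x₁', y₁') with ⟨x₂', y₂'⟩
  have e1 : ∀ ζ, L₁ x₁ a ζ * L₂ y₁ b ζ = L₂ y b ζ * L₁ x a ζ := by
    intro ζ; have := hS a b x y ζ; rwa [hSxy] at this
  have e2 : ∀ ζ, L₁ x₂ a ζ * L₃ z₁ c ζ = L₃ z c ζ * L₁ x₁ a ζ := by
    intro ζ; have := hR a c x₁ z ζ; rwa [hRxz] at this
  have e3 : ∀ ζ, L₂ y₂ b ζ * L₃ z₂ c ζ = L₃ z₁ c ζ * L₂ y₁ b ζ := by
    intro ζ; have := hT b c y₁ z₁ ζ; rwa [hTyz] at this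
  have f1 : ∀ ζ, L₂ y₁' b ζ * L₃ z₁' c ζ = L₃ z c ζ * L₂ y b ζ := by
    intro ζ; have := hT b c y z ζ; rwa [hT'] at this
  have f2 : ∀ ζ, L₁ x₁' a ζ * L₃ z₂' c ζ = L₃ z₁' c ζ * L₁ x a ζ := by
    intro ζ; have := hR a c x z₁' ζ; rwa [hR'] at this
  have f3 : ∀ ζ, L₁ x₂' a ζ * L₂ y₂' b ζ = L₂ y₁' b ζ * L₁ x₁' a ζ := by
    intro ζ; have := hS a b x₁' y₁' ζ; rwa [hS'] at this
  have key : ∀ ζ, L₁ x₂ a ζ * L₂ y₂ b ζ * L₃ z₂ c ζ =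
      L₁ x₂' a ζ * L₂ y₂' b ζ * L₃ z₂' c ζ := by
    intro ζ
    calc L₁ x₂ a ζ * L₂ y₂ b ζ * L₃ z₂ c ζ
        = L₁ x₂ a ζ * (L₂ y₂ b ζ * L₃ z₂ c ζ) := by rw [mul_assoc]
      _ = L₁ x₂ a ζ * (L₃ z₁ c ζ * L₂ y₁ b ζ) := by rw [e3]
      _ = L₁ x₂ a ζ * L₃ z₁ c ζ * L₂ y₁ b ζ := by rw [mul_assoc]
      _ = L₃ z c ζ * L₁ x₁ a ζ * L₂ y₁ b ζ := by rw [e2]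
      _ = L₃ z c ζ * (L₁ x₁ a ζ * L₂ y₁ b ζ) := by rw [mul_assoc]
      _ = L₃ z c ζ * (L₂ y b ζ * L₁ x a ζ) := by rw [e1]
      _ = L₃ z c ζ * L₂ y b ζ * L₁ x a ζ := by rw [mul_assoc]
      _ = L₂ y₁' b ζ * L₃ z₁' c ζ * L₁ x a ζ := by rw [f1]
      _ = L₂ y₁' b ζ * (L₃ z₁' c ζ * L₁ x a ζ) := by rw [mul_assoc]
      _ = L₂ y₁' b ζ * (L₁ x₁' a ζ * L₃ z₂' c ζ) := by rw [f2]
      _ = L₂ y₁' b ζ * L₁ x₁' a ζ * L₃ z₂' c ζ := by rw [mul_assoc]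
      _ = L₁ x₂' a ζ * L₂ y₂' b ζ * L₃ z₂' c ζ := by rw [f3]
  obtain ⟨hx, hy, hz⟩ := huniq a b c x₂' y₂' z₂' x₂ y₂ z₂ key
  simp only [Function.comp_apply, act12, act13, act23, hSxy, hRxz, hTyz, hT', hR', hS']
  exact Prod.ext hx (Prod.ext hy hz)
end

section
/- If (L₁, L₂, L₃) is a strong Lax triple (each Lax equation is equivalent to the corresponding map) satisfying the unique-factorization condition of the previous proposition, and L₁ = L₂ = L₃, then the resulting map S_{α,β} satisfies the parametric (set-theoretic) Yang–Baxter equation S²³_{β,γ} ∘ S¹³_{α,γ} ∘ S¹²_{α,β} = S¹²_{α,β} ∘ S¹³_{α,γ} ∘ S²³_{β,γ}. -/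
open Matrix

variable {𝒳 : Type*}

/-- Corollary: a strong Lax matrix `L` (i.e. the Lax triple `(L,L,L)`) whose
triple products factorize uniquely yields a parametric Yang–Baxter map. -/
theorem stmt6 {𝒳 P : Type*} {k : ℕ}
    (L : 𝒳 → P → ℂ → Matrix (Fin k) (Fin k) ℂ)
    (S : P → P → 𝒳 × 𝒳 → 𝒳 × 𝒳)
    (hstrong : ∀ a b x y u v,
      S a b (x, y) = (u, v) ↔ ∀ ζ : ℂ, L u a ζ * L v b ζ = L y b ζ * L x a ζ)
    (huniq : ∀ a b c x y z x' y' z',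
      (∀ ζ : ℂ, L x' a ζ * L y' b ζ * L z' c ζ = L x a ζ * L y b ζ * L z c ζ) →
      x' = x ∧ y' = y ∧ z' = z)
    (a b c : P) :
    act23 (S b c) ∘ act13 (S a c) ∘ act12 (S a b) =
      act12 (S a b) ∘ act13 (S a c) ∘ act23 (S b c) := by
  funext p
  obtain ⟨x, y, z⟩ := p
  -- LHS intermediates
  obtain ⟨u, v, huv⟩ : ∃ u v, S a b (x, y) = (u, v) := ⟨_, _, rfl⟩
  obtain ⟨u', z', hz'⟩ : ∃ u' z', S a c (u, z) = (u', z') := ⟨_, _, rfl⟩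
  obtain ⟨v', z'', hz''⟩ : ∃ v' z'', S b c (v, z') = (v', z'') := ⟨_, _, rfl⟩
  -- RHS intermediates
  obtain ⟨y1, z1, hy1⟩ : ∃ y1 z1, S b c (y, z) = (y1, z1) := ⟨_, _, rfl⟩
  obtain ⟨x1, z2, hx1⟩ : ∃ x1 z2, S a c (x, z1) = (x1, z2) := ⟨_, _, rfl⟩
  obtain ⟨x2, y2, hx2⟩ : ∃ x2 y2, S a b (x1, y1) = (x2, y2) := ⟨_, _, rfl⟩
  have h1 := (hstrong a b x y u v).mp huv
  have h2 := (hstrong a c u z u' z').mp hz'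
  have h3 := (hstrong b c v z' v' z'').mp hz''
  have h4 := (hstrong b c y z y1 z1).mp hy1
  have h5 := (hstrong a c x z1 x1 z2).mp hx1
  have h6 := (hstrong a b x1 y1 x2 y2).mp hx2
  have key : ∀ ζ : ℂ, L u' a ζ * L v' b ζ * L z'' c ζ = L x2 a ζ * L y2 b ζ * L z2 c ζ := by
    intro ζ
    have lhs : L u' a ζ * L v' b ζ * L z'' c ζ = L z c ζ * L y b ζ * L x a ζ := by
      calc L u' a ζ * L v' b ζ * L z'' c ζ
          = L u' a ζ * (L v' b ζ * L z'' c ζ) := by rw [mul_assoc]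
        _ = L u' a ζ * (L z' c ζ * L v b ζ) := by rw [h3]
        _ = L u' a ζ * L z' c ζ * L v b ζ := by rw [mul_assoc]
        _ = L z c ζ * L u a ζ * L v b ζ := by rw [h2]
        _ = L z c ζ * (L u a ζ * L v b ζ) := by rw [mul_assoc]
        _ = L z c ζ * (L y b ζ * L x a ζ) := by rw [h1]
        _ = L z c ζ * L y b ζ * L x a ζ := by rw [mul_assoc]
    have rhs : L x2 a ζ * L y2 b ζ * L z2 c ζ = L z c ζ * L y b ζ * L x a ζ := by
      calc L x2 a ζ * L y2 b ζ * L z2 c ζ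
          = L y1 b ζ * L x1 a ζ * L z2 c ζ := by rw [h6]
        _ = L y1 b ζ * (L x1 a ζ * L z2 c ζ) := by rw [mul_assoc]
        _ = L y1 b ζ * (L z1 c ζ * L x a ζ) := by rw [h5]
        _ = L y1 b ζ * L z1 c ζ * L x a ζ := by rw [mul_assoc]
        _ = L z c ζ * L y b ζ * L x a ζ := by rw [h4]
    rw [lhs, rhs]
  obtain ⟨e1, e2, e3⟩ := huniq a b c x2 y2 z2 u' v' z'' key
  simp only [Function.comp, act12, act13, act23, huv, hy1]
  simp only [hz', hz'', hx1, hx2]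
  simp [e1, e2, e3]
end

section
/- Let L₂(x₁,x₂;α,ζ) = [[x₁x₂ + α − ζ, x₁], [x₂, 1]]. The parametric map R̄_{α,β}: ((x₁,x₂),(y₁,y₂)) ↦ ((ū₁,ū₂),(v̄₁,v̄₂)) with ū₁ = y₁ − (α−β)x₁/(1 + x₁y₂), ū₂ = y₂, v̄₁ = x₁, v̄₂ = x₂ + (α−β)y₂/(1 + x₁y₂) satisfies the Lax equation L₂(ū₁,ū₂;α,ζ)·L₂(v̄₁,v̄₂;β,ζ) = L₂(y₁,y₂;β,ζ)·L₂(x₁,x₂;α,ζ) for all ζ. -/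
open Matrix

/-- The Lax matrix `L₂(x₁,x₂;α,ζ)`. -/
def L2mat (x₁ x₂ a ζ : ℂ) : Matrix (Fin 2) (Fin 2) ℂ :=
  !![x₁ * x₂ + a - ζ, x₁; x₂, 1]

theorem stmt9 (a b x₁ x₂ y₁ y₂ : ℂ) (h : 1 + x₁ * y₂ ≠ 0) (ζ : ℂ) :
    L2mat (y₁ - (a - b) * x₁ / (1 + x₁ * y₂)) y₂ a ζ *
        L2mat x₁ (x₂ + (a - b) * y₂ / (1 + x₁ * y₂)) b ζ =
      L2mat y₁ y₂ b ζ * L2mat x₁ x₂ a ζ := by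
  have h' : 1 + y₂ * x₁ ≠ 0 := by rwa [mul_comm]
  unfold L2mat
  ext i j
  fin_cases i <;> fin_cases j <;>
    simp [Matrix.mul_apply, Fin.sum_univ_two] <;>
    field_simp <;> ring
end

section
/- The map S_{α,β} of the previous statement preserves the functions J₁ˢ(x₁,x₂,y₁,y₂) = x₂y₂ + x₁(y₁y₂ + β − 1) − (y₁/x₂)(x₁² − x₁ + α) and J₂ˢ(x₁,x₂,y₁,y₂) = x₁ + y₁y₂, i.e., Jᵢˢ ∘ S_{α,β} = Jᵢˢ as rational functions, for i = 1, 2. -/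
/-- First integral `J₁ˢ` coming from the trace of the monodromy matrix. -/
noncomputable def J1s (a b x₁ x₂ y₁ y₂ : ℂ) : ℂ :=
  x₂ * y₂ + x₁ * (y₁ * y₂ + b - 1) - y₁ / x₂ * (x₁ ^ 2 - x₁ + a)

/-- Second integral `J₂ˢ`. -/
def J2s (x₁ x₂ y₁ y₂ : ℂ) : ℂ := x₁ + y₁ * y₂

set_option maxHeartbeats 2000000 in
theorem stmt12 (a b x₁ x₂ y₁ y₂ : ℂ) (hx₂ : x₂ ≠ 0)
    (hden : x₂ * y₂ - x₁ - b + 1 ≠ 0) :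
    let u₁ := y₂ * y₁ - x₁ * y₁ / x₂ +
      (a + b * (x₂ * y₂ - x₁)) * (x₂ + y₁) / (x₂ * (x₂ * y₂ - x₁ - b + 1))
    let u₂ := -(a * (x₂ + y₁) ^ 2 +
        (b * x₂ + y₁ * y₂ * x₂ - x₁ * y₁ + y₁) *
          (x₂ * (b + y₁ * y₂ - 1) - x₁ * y₁)) /
      (x₂ * (x₂ * y₂ - x₁ - b + 1))
    let v₁ := x₂ + y₁
    let v₂ := x₁ / x₂ - (a + b * (x₂ * y₂ - x₁)) / (x₂ * (x₂ * y₂ - x₁ - b + 1))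
    u₂ ≠ 0 →
      J1s a b u₁ u₂ v₁ v₂ = J1s a b x₁ x₂ y₁ y₂ ∧
      J2s u₁ u₂ v₁ v₂ = J2s x₁ x₂ y₁ y₂ := by
  intro u₁ u₂ v₁ v₂ hu₂
  set d := x₂ * y₂ - x₁ - b + 1 with hd_def
  set N₂ := a * (x₂ + y₁) ^ 2 +
      (b * x₂ + y₁ * y₂ * x₂ - x₁ * y₁ + y₁) *
        (x₂ * (b + y₁ * y₂ - 1) - x₁ * y₁) with hN₂_def
  set P₁ := y₂ * y₁ * (x₂ * d) - x₁ * y₁ * d +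
      (a + b * (x₂ * y₂ - x₁)) * (x₂ + y₁) with hP₁_def
  set P₂ := x₁ * d - (a + b * (x₂ * y₂ - x₁)) with hP₂_def
  set Q := (x₂ * y₂ - x₁) ^ 2 + (x₂ * y₂ - x₁) + a with hQ_def
  have hN₂ : N₂ ≠ 0 := by
    intro h
    apply hu₂
    show -N₂ / (x₂ * d) = 0
    rw [h, neg_zero, zero_div]
  have hu₂' : u₂ = -N₂ / (x₂ * d) := rfl
  have hu₁ : u₁ = P₁ / (x₂ * d) := by
    show y₂ * y₁ - x₁ * y₁ / x₂ +
      (a + b * (x₂ * y₂ - x₁)) * (x₂ + y₁) / (x₂ * d) = _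
    rw [hP₁_def]
    field_simp
  have hv₂ : v₂ = P₂ / (x₂ * d) := by
    show x₁ / x₂ - (a + b * (x₂ * y₂ - x₁)) / (x₂ * d) = _
    rw [hP₂_def]
    field_simp
  have hfac : P₁ ^ 2 - P₁ * (x₂ * d) + a * (x₂ * d) ^ 2 = N₂ * Q := by
    rw [hP₁_def, hN₂_def, hQ_def, hd_def]; ring
  have key : u₁ ^ 2 - u₁ + a = N₂ * Q / (x₂ * d) ^ 2 := by
    rw [hu₁, ← hfac]
    field_simp
  have term3 : v₁ / u₂ * (u₁ ^ 2 - u₁ + a) = -(v₁ * Q / (x₂ * d)) := by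
    rw [key, hu₂']
    field_simp
  refine ⟨?_, ?_⟩
  · show u₂ * v₂ + u₁ * (v₁ * v₂ + b - 1) - v₁ / u₂ * (u₁ ^ 2 - u₁ + a) = _
    rw [term3, hu₁, hu₂', hv₂]
    show _ = x₂ * y₂ + x₁ * (y₁ * y₂ + b - 1) - y₁ / x₂ * (x₁ ^ 2 - x₁ + a)
    have hv₁ : v₁ = x₂ + y₁ := rfl
    rw [hv₁, hP₁_def, hP₂_def, hN₂_def, hQ_def]
    field_simp
    ring
  · show u₁ + v₁ * v₂ = x₁ + y₁ * y₂
    rw [hu₁, hv₂]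
    have hv₁ : v₁ = x₂ + y₁ := rfl
    rw [hv₁, hP₁_def, hP₂_def]
    field_simp
    ring
end

section
/- The two functions J₁ˢ = x₂y₂ + x₁(y₁y₂ + β − 1) − (y₁/x₂)(x₁² − x₁ + α) and J₂ˢ = x₁ + y₁y₂ are in involution with respect to the Poisson bracket on ℂ⁴ determined by {x₁,x₂} = −x₂, {y₁,y₂} = 1, {xᵢ,yⱼ} = 0 (on the open set x₂ ≠ 0): {J₁ˢ, J₂ˢ} = 0. -/
/-- The Poisson bracket determined by `{x₁,x₂} = −x₂`, `{y₁,y₂} = 1`,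
`{xᵢ,yⱼ} = 0`. -/
noncomputable def pbr (f g : ℂ → ℂ → ℂ → ℂ → ℂ) (x₁ x₂ y₁ y₂ : ℂ) : ℂ :=
  -x₂ * (deriv (fun t => f t x₂ y₁ y₂) x₁ * deriv (fun t => g x₁ t y₁ y₂) x₂ -
         deriv (fun t => f x₁ t y₁ y₂) x₂ * deriv (fun t => g t x₂ y₁ y₂) x₁) +
  (deriv (fun t => f x₁ x₂ t y₂) y₁ * deriv (fun t => g x₁ x₂ y₁ t) y₂ -
   deriv (fun t => f x₁ x₂ y₁ t) y₂ * deriv (fun t => g x₁ x₂ t y₂) y₁)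

theorem stmt13 (a b : ℂ) (x₁ x₂ y₁ y₂ : ℂ) (hx₂ : x₂ ≠ 0) :
    pbr (fun x₁ x₂ y₁ y₂ =>
          x₂ * y₂ + x₁ * (y₁ * y₂ + b - 1) - y₁ / x₂ * (x₁ ^ 2 - x₁ + a))
        (fun x₁ _ y₁ y₂ => x₁ + y₁ * y₂) x₁ x₂ y₁ y₂ = 0 := by
  have hf1 : HasDerivAt
      (fun t : ℂ => x₂ * y₂ + t * (y₁ * y₂ + b - 1) - y₁ / x₂ * (t ^ 2 - t + a))
      ((y₁ * y₂ + b - 1) - y₁ / x₂ * (2 * x₁ - 1)) x₁ := by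
    have h := ((hasDerivAt_const x₁ (x₂ * y₂)).add
        ((hasDerivAt_id x₁).mul_const (y₁ * y₂ + b - 1))).sub
      ((((hasDerivAt_pow 2 x₁).sub (hasDerivAt_id x₁)).add_const a).const_mul (y₁ / x₂))
    convert h using 1 <;> first | rfl | ring
  have hf2 : HasDerivAt
      (fun t : ℂ => t * y₂ + x₁ * (y₁ * y₂ + b - 1) - y₁ / t * (x₁ ^ 2 - x₁ + a))
      (y₂ + y₁ / x₂ ^ 2 * (x₁ ^ 2 - x₁ + a)) x₂ := by
    have h := (((hasDerivAt_id x₂).mul_const y₂).add_const (x₁ * (y₁ * y₂ + b - 1))).sub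
      ((((hasDerivAt_inv hx₂).const_mul y₁).mul_const (x₁ ^ 2 - x₁ + a)))
    have heq : (fun t : ℂ => t * y₂ + x₁ * (y₁ * y₂ + b - 1) - y₁ / t * (x₁ ^ 2 - x₁ + a))
        = fun t : ℂ => (t * y₂ + x₁ * (y₁ * y₂ + b - 1)) - y₁ * t⁻¹ * (x₁ ^ 2 - x₁ + a) := by
      funext t; rw [div_eq_mul_inv]
    rw [heq]
    convert h using 1
    all_goals first
      | rfl
      | (funext t; simp only [id_eq]; ring)
      | (field_simp; ring)
      | ring
  have hf3 : HasDerivAt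
      (fun t : ℂ => x₂ * y₂ + x₁ * (t * y₂ + b - 1) - t / x₂ * (x₁ ^ 2 - x₁ + a))
      (x₁ * y₂ - (x₁ ^ 2 - x₁ + a) / x₂) y₁ := by
    have h := ((hasDerivAt_const y₁ (x₂ * y₂)).add
        ((((hasDerivAt_id y₁).mul_const y₂).add_const (b - 1)).const_mul x₁)).sub
      (((hasDerivAt_id y₁).div_const x₂).mul_const (x₁ ^ 2 - x₁ + a))
    convert h using 1
    all_goals first
      | rfl
      | (funext t; simp only [id_eq, Pi.add_apply, Pi.sub_apply]; ring)
      | (field_simp; ring)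
      | ring
  have hf4 : HasDerivAt
      (fun t : ℂ => x₂ * t + x₁ * (y₁ * t + b - 1) - y₁ / x₂ * (x₁ ^ 2 - x₁ + a))
      (x₂ + x₁ * y₁) y₂ := by
    have h := (((hasDerivAt_id y₂).const_mul x₂).add
        ((((hasDerivAt_id y₂).const_mul y₁).add_const (b - 1)).const_mul x₁)).sub_const
      (y₁ / x₂ * (x₁ ^ 2 - x₁ + a))
    convert h using 1
    all_goals first
      | rfl
      | (funext t; simp only [id_eq, Pi.add_apply, Pi.sub_apply]; ring)
      | ring
  have hg1 : HasDerivAt (fun t : ℂ => t + y₁ * y₂) 1 x₁ :=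
    (hasDerivAt_id x₁).add_const _
  have hg2 : HasDerivAt (fun _ : ℂ => x₁ + y₁ * y₂) 0 x₂ := hasDerivAt_const _ _
  have hg3 : HasDerivAt (fun t : ℂ => x₁ + t * y₂) y₂ y₁ := by
    have h := ((hasDerivAt_id y₁).mul_const y₂).const_add x₁
    simpa using h
  have hg4 : HasDerivAt (fun t : ℂ => x₁ + y₁ * t) y₁ y₂ := by
    have h := ((hasDerivAt_id y₂).const_mul y₁).const_add x₁
    simpa using h
  simp only [pbr]
  rw [hf1.deriv, hf2.deriv, hf3.deriv, hf4.deriv, hg1.deriv, hg2.deriv, hg3.deriv, hg4.deriv]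
  field_simp
  ring
end

section
/- The functions J₁^R̄ = αy₁y₂ + βx₁x₂ + (x₂y₁ + 1)(x₁y₂ + 1) and J₂^R̄ = x₁x₂ + y₁y₂ are invariant under the map R̄_{α,β}: ((x₁,x₂),(y₁,y₂)) ↦ ((y₁ − (α−β)x₁/(1+x₁y₂), y₂), (x₁, x₂ + (α−β)y₂/(1+x₁y₂))), and satisfy {J₁^R̄, J₂^R̄} = 0 for the canonical bracket {x₁,x₂} = 1, {y₁,y₂} = 1, {xᵢ,yⱼ} = 0. -/
/-- The canonical Poisson bracket `{x₁,x₂} = 1`, `{y₁,y₂} = 1`, `{xᵢ,yⱼ} = 0`. -/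
noncomputable def pbrCan (f g : ℂ → ℂ → ℂ → ℂ → ℂ) (x₁ x₂ y₁ y₂ : ℂ) : ℂ :=
  (deriv (fun t => f t x₂ y₁ y₂) x₁ * deriv (fun t => g x₁ t y₁ y₂) x₂ -
   deriv (fun t => f x₁ t y₁ y₂) x₂ * deriv (fun t => g t x₂ y₁ y₂) x₁) +
  (deriv (fun t => f x₁ x₂ t y₂) y₁ * deriv (fun t => g x₁ x₂ y₁ t) y₂ -
   deriv (fun t => f x₁ x₂ y₁ t) y₂ * deriv (fun t => g x₁ x₂ t y₂) y₁)

/-- `J₁^R̄ = αy₁y₂ + βx₁x₂ + (x₂y₁+1)(x₁y₂+1)`. -/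
def J1R (a b x₁ x₂ y₁ y₂ : ℂ) : ℂ :=
  a * (y₁ * y₂) + b * (x₁ * x₂) + (x₂ * y₁ + 1) * (x₁ * y₂ + 1)

/-- `J₂^R̄ = x₁x₂ + y₁y₂`. -/
def J2R (x₁ x₂ y₁ y₂ : ℂ) : ℂ := x₁ * x₂ + y₁ * y₂

lemma deriv_lin (c d p : ℂ) : deriv (fun t => c*t + d) p = c := by
  rw [show (fun t : ℂ => c*t + d) = fun t => t*c + d from by funext t; ring]
  simp

theorem stmt14 (a b x₁ x₂ y₁ y₂ : ℂ) (h : 1 + x₁ * y₂ ≠ 0) :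
    (J1R a b (y₁ - (a - b) * x₁ / (1 + x₁ * y₂)) y₂ x₁
        (x₂ + (a - b) * y₂ / (1 + x₁ * y₂)) = J1R a b x₁ x₂ y₁ y₂) ∧
    (J2R (y₁ - (a - b) * x₁ / (1 + x₁ * y₂)) y₂ x₁
        (x₂ + (a - b) * y₂ / (1 + x₁ * y₂)) = J2R x₁ x₂ y₁ y₂) ∧
    pbrCan (fun x₁ x₂ y₁ y₂ => J1R a b x₁ x₂ y₁ y₂)
        (fun x₁ x₂ y₁ y₂ => J2R x₁ x₂ y₁ y₂) x₁ x₂ y₁ y₂ = 0 := by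
  refine ⟨?_, ?_, ?_⟩
  · unfold J1R; field_simp; ring
  · unfold J2R; field_simp; ring
  · unfold pbrCan
    rw [show (fun t => J1R a b t x₂ y₁ y₂) = fun t => (b*x₂ + x₂*y₁*y₂ + y₂)*t + (a*(y₁*y₂) + x₂*y₁ + 1) from by funext t; unfold J1R; ring]
    rw [show (fun t => J1R a b x₁ t y₁ y₂) = fun t => (b*x₁ + y₁*(x₁*y₂+1))*t + (a*(y₁*y₂) + x₁*y₂ + 1) from by funext t; unfold J1R; ring]
    rw [show (fun t => J1R a b x₁ x₂ t y₂) = fun t => (a*y₂ + x₂*(x₁*y₂+1))*t + (b*(x₁*x₂) + x₁*y₂ + 1) from by funext t; unfold J1R; ring]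
    rw [show (fun t => J1R a b x₁ x₂ y₁ t) = fun t => (a*y₁ + x₁*(x₂*y₁+1))*t + (b*(x₁*x₂) + x₂*y₁ + 1) from by funext t; unfold J1R; ring]
    rw [show (fun t => J2R t x₂ y₁ y₂) = fun t => x₂*t + y₁*y₂ from by funext t; unfold J2R; ring]
    rw [show (fun t => J2R x₁ t y₁ y₂) = fun t => x₁*t + y₁*y₂ from by funext t; unfold J2R; ring]
    rw [show (fun t => J2R x₁ x₂ t y₂) = fun t => y₂*t + x₁*x₂ from by funext t; unfold J2R; ring]
    rw [show (fun t => J2R x₁ x₂ y₁ t) = fun t => y₁*t + x₁*x₂ from by funext t; unfold J2R; ring]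
    simp only [deriv_lin]
    ring
end

section
/- The parametric map R_{α,β} on ℂ²×ℂ² defined by its Lax equation with L₁ (i.e., the unique solution of L₁(u₁′,u₂′;α,ζ)L₁(v₁′,v₂′;β,ζ) = L₁(y₁,y₂;β,ζ)L₁(x₁,x₂;α,ζ)), given explicitly by u₁′ = y₁ + x₂y₂(α−β)(x₁+y₁−1)/N, u₂′ = (y₂/N)(α(x₂+y₂)² + (x₂(y₁−1) − x₁y₂)(x₂y₁ − x₁y₂ + y₂)), v₁′ = x₁ − x₂y₂(α−β)(x₁+y₁−1)/N, v₂′ = (x₂/N)(β(x₂+y₂)² + (x₂(y₁−1) − x₁y₂)(x₂y₁ − x₁y₂ + y₂)), with N = αy₂² + βx₂² + (α+β−1)y₂x₂ + (x₂y₁ − x₁y₂)(x₂y₁ − x₁y₂ + y₂ − x₂), is an involution: R_{α,β} ∘ R_{α,β} = Id (on the domain where N ≠ 0 and all components are defined). -/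
/-- `N(x₁,x₂,y₁,y₂)` for the quadrirational YB map `R_{α,β}`. -/
def Nden (a b x₁ x₂ y₁ y₂ : ℂ) : ℂ :=
  a * y₂ ^ 2 + b * x₂ ^ 2 + (a + b - 1) * y₂ * x₂ +
    (x₂ * y₁ - x₁ * y₂) * (x₂ * y₁ - x₁ * y₂ + y₂ - x₂)

/-- The quadrirational Yang–Baxter map `R_{α,β}` on `ℂ² × ℂ²`. -/
noncomputable def rmap (a b : ℂ) (p : (ℂ × ℂ) × (ℂ × ℂ)) : (ℂ × ℂ) × (ℂ × ℂ) :=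
  let x₁ := p.1.1; let x₂ := p.1.2; let y₁ := p.2.1; let y₂ := p.2.2
  let N := Nden a b x₁ x₂ y₁ y₂
  ((y₁ + x₂ * y₂ * (a - b) * (x₁ + y₁ - 1) / N,
    y₂ / N * (a * (x₂ + y₂) ^ 2 +
      (x₂ * (y₁ - 1) - x₁ * y₂) * (x₂ * y₁ - x₁ * y₂ + y₂))),
   (x₁ - x₂ * y₂ * (a - b) * (x₁ + y₁ - 1) / N,
    x₂ / N * (b * (x₂ + y₂) ^ 2 +
      (x₂ * (y₁ - 1) - x₁ * y₂) * (x₂ * y₁ - x₁ * y₂ + y₂))))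

set_option maxHeartbeats 4000000

lemma master (a b x1 x2 y1 y2 n p r w : ℂ)
    (hn : n ≠ 0)
    (h1 : y2 * p * (x1 * n - x2 * y2 * (a - b) * (x1 + y1 - 1)) - x2 * r * (y1 * n + x2 * y2 * (a - b) * (x1 + y1 - 1)) = w * n)
    (hmain : a * x2 ^ 2 * r ^ 2 + b * y2 ^ 2 * p ^ 2 + (a + b - 1) * x2 * y2 * r * p
        + w * (w + x2 * r - y2 * p) = p * r * n)
    (hg2 : a * (y2 * p + x2 * r) ^ 2 + (w - y2 * p) * (w + x2 * r) = n ^ 2 * p)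
    (hg4 : b * (y2 * p + x2 * r) ^ 2 + (w - y2 * p) * (w + x2 * r) = n ^ 2 * r)
    (hNA : Nden a b (y1 + x2 * y2 * (a - b) * (x1 + y1 - 1) / n) (y2 / n * p)
        (x1 - x2 * y2 * (a - b) * (x1 + y1 - 1) / n) (x2 / n * r) ≠ 0) :
    ((x1 - x2 * y2 * (a - b) * (x1 + y1 - 1) / n) + (y2 / n * p) * (x2 / n * r) * (a - b) *
        ((y1 + x2 * y2 * (a - b) * (x1 + y1 - 1) / n) + (x1 - x2 * y2 * (a - b) * (x1 + y1 - 1) / n) - 1) /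
        (Nden a b (y1 + x2 * y2 * (a - b) * (x1 + y1 - 1) / n) (y2 / n * p)
          (x1 - x2 * y2 * (a - b) * (x1 + y1 - 1) / n) (x2 / n * r)) = x1) ∧
    ((x2 / n * r) / (Nden a b (y1 + x2 * y2 * (a - b) * (x1 + y1 - 1) / n) (y2 / n * p)
          (x1 - x2 * y2 * (a - b) * (x1 + y1 - 1) / n) (x2 / n * r)) *
        (a * ((y2 / n * p) + (x2 / n * r)) ^ 2 +
          ((y2 / n * p) * ((x1 - x2 * y2 * (a - b) * (x1 + y1 - 1) / n) - 1) -
            (y1 + x2 * y2 * (a - b) * (x1 + y1 - 1) / n) * (x2 / n * r)) *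
          ((y2 / n * p) * (x1 - x2 * y2 * (a - b) * (x1 + y1 - 1) / n) -
            (y1 + x2 * y2 * (a - b) * (x1 + y1 - 1) / n) * (x2 / n * r) + (x2 / n * r))) = x2) ∧
    ((y1 + x2 * y2 * (a - b) * (x1 + y1 - 1) / n) - (y2 / n * p) * (x2 / n * r) * (a - b) *
        ((y1 + x2 * y2 * (a - b) * (x1 + y1 - 1) / n) + (x1 - x2 * y2 * (a - b) * (x1 + y1 - 1) / n) - 1) /
        (Nden a b (y1 + x2 * y2 * (a - b) * (x1 + y1 - 1) / n) (y2 / n * p)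
          (x1 - x2 * y2 * (a - b) * (x1 + y1 - 1) / n) (x2 / n * r)) = y1) ∧
    ((y2 / n * p) / (Nden a b (y1 + x2 * y2 * (a - b) * (x1 + y1 - 1) / n) (y2 / n * p)
          (x1 - x2 * y2 * (a - b) * (x1 + y1 - 1) / n) (x2 / n * r)) *
        (b * ((y2 / n * p) + (x2 / n * r)) ^ 2 +
          ((y2 / n * p) * ((x1 - x2 * y2 * (a - b) * (x1 + y1 - 1) / n) - 1) -
            (y1 + x2 * y2 * (a - b) * (x1 + y1 - 1) / n) * (x2 / n * r)) *
          ((y2 / n * p) * (x1 - x2 * y2 * (a - b) * (x1 + y1 - 1) / n) -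
            (y1 + x2 * y2 * (a - b) * (x1 + y1 - 1) / n) * (x2 / n * r) + (x2 / n * r))) = y2) := by
  have c1 : ∀ x : ℂ, x * n / n ^ 2 = x / n := fun x => by
    rw [pow_two, ← div_div, mul_div_assoc, div_self hn, mul_one]
  have c2 : ∀ x : ℂ, n ^ 2 * x / n ^ 2 = x := fun x => by
    rw [mul_comm, mul_div_assoc, div_self (pow_ne_zero 2 hn), mul_one]
  set A1 := y1 + x2 * y2 * (a - b) * (x1 + y1 - 1) / n with hA1
  set A2 := y2 / n * p with hA2
  set A3 := x1 - x2 * y2 * (a - b) * (x1 + y1 - 1) / n with hA3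
  set A4 := x2 / n * r with hA4
  have e1 : A2 * A3 - A1 * A4 = w / n := by
    have ex : A2 * A3 - A1 * A4
        = (y2 * p * (x1 * n - x2 * y2 * (a - b) * (x1 + y1 - 1)) - x2 * r * (y1 * n + x2 * y2 * (a - b) * (x1 + y1 - 1))) / n ^ 2 := by
      rw [hA1, hA2, hA3, hA4]
      field_simp
    refine ex.trans ?_
    rw [h1, c1]
  have hNB : Nden a b A1 A2 A3 A4 = p * r / n := by
    simp only [Nden]
    rw [e1, hA2, hA4]
    have ex : a * (x2 / n * r) ^ 2 + b * (y2 / n * p) ^ 2 + (a + b - 1) * (x2 / n * r) * (y2 / n * p)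
          + w / n * (w / n + x2 / n * r - y2 / n * p)
        = (a * x2 ^ 2 * r ^ 2 + b * y2 ^ 2 * p ^ 2 + (a + b - 1) * x2 * y2 * r * p
          + w * (w + x2 * r - y2 * p)) / n ^ 2 := by
      field_simp
    refine ex.trans ?_
    rw [hmain, c1]
  have hpr : p * r ≠ 0 := by
    intro h
    exact hNA (by rw [hNB, h, zero_div])
  have hp : p ≠ 0 := (mul_ne_zero_iff.mp hpr).1
  have hr : r ≠ 0 := (mul_ne_zero_iff.mp hpr).2
  have hsum : A2 + A4 = (y2 * p + x2 * r) / n := by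
    rw [hA2, hA4, div_mul_eq_mul_div, div_mul_eq_mul_div, ← add_div]
  have hu : A2 * (A3 - 1) - A1 * A4 = (w - y2 * p) / n := by
    have ex : A2 * (A3 - 1) - A1 * A4
        = (y2 * p * (x1 * n - x2 * y2 * (a - b) * (x1 + y1 - 1)) - x2 * r * (y1 * n + x2 * y2 * (a - b) * (x1 + y1 - 1)) - y2 * p * n) / n ^ 2 := by
      rw [hA1, hA2, hA3, hA4]
      field_simp
      ring
    refine ex.trans ?_
    rw [h1, show w * n - y2 * p * n = (w - y2 * p) * n from by ring, c1]
  have hz : A2 * A3 - A1 * A4 + A4 = (w + x2 * r) / n := by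
    rw [e1, hA4, div_mul_eq_mul_div, ← add_div]
  have h13 : A1 + A3 - 1 = x1 + y1 - 1 := by rw [hA1, hA3]; ring
  have hbr2 : a * (A2 + A4) ^ 2 + (A2 * (A3 - 1) - A1 * A4) * (A2 * A3 - A1 * A4 + A4) = p := by
    rw [hsum, hu, hz, div_pow, div_mul_div_comm, ← pow_two, ← mul_div_assoc, ← add_div, hg2, c2]
  have hbr4 : b * (A2 + A4) ^ 2 + (A2 * (A3 - 1) - A1 * A4) * (A2 * A3 - A1 * A4 + A4) = r := by
    rw [hsum, hu, hz, div_pow, div_mul_div_comm, ← pow_two, ← mul_div_assoc, ← add_div, hg4, c2]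
  refine ⟨?_, ?_, ?_, ?_⟩
  · rw [hNB, h13]
    simp only [hA2, hA3, hA4]
    field_simp
    ring
  · rw [hbr2, hNB]
    simp only [hA4]
    field_simp
  · rw [hNB, h13]
    simp only [hA1, hA2, hA4]
    field_simp
    ring
  · rw [hbr4, hNB]
    simp only [hA2]
    field_simp

/-- `R_{α,β}` is an involution on the domain where `N` is nonzero at the point
and at its image. -/
theorem stmt15 (a b : ℂ) (p : (ℂ × ℂ) × (ℂ × ℂ))
    (hN : Nden a b p.1.1 p.1.2 p.2.1 p.2.2 ≠ 0)
    (hN' : Nden a b (rmap a b p).1.1 (rmap a b p).1.2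
        (rmap a b p).2.1 (rmap a b p).2.2 ≠ 0) :
    rmap a b (rmap a b p) = p := by
  obtain ⟨⟨x1, x2⟩, ⟨y1, y2⟩⟩ := p
  obtain ⟨h1, h2, h3, h4⟩ :=
    master a b x1 x2 y1 y2 (a * y2 ^ 2 + b * x2 ^ 2 + (a + b - 1) * y2 * x2 + (x2 * y1 - x1 * y2) * (x2 * y1 - x1 * y2 + y2 - x2)) (a * (x2 + y2) ^ 2 + (x2 * (y1 - 1) - x1 * y2) * (x2 * y1 - x1 * y2 + y2)) (b * (x2 + y2) ^ 2 + (x2 * (y1 - 1) - x1 * y2) * (x2 * y1 - x1 * y2 + y2)) (x2^2*y1*y2 + (-1)*x2^2*y1^2*y2 + x2^3*y1^2 + (-1)*x2^3*y1^3 + (-1)*x1*x2*y2^2 + 2*x1*x2*y1*y2^2 + (-2)*x1*x2^2*y1*y2 + 3*x1*x2^2*y1^2*y2 + (-1)*x1^2*y2^3 + x1^2*x2*y2^2 + (-3)*x1^2*x2*y1*y2^2 + x1^3*y2^3 + (-1)*b*x2*y2^2 + (-1)*b*x2^2*y2 + (-1)*b*x2^2*y1*y2 + (-1)*b*x2^3*y1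 + b*x1*x2*y2^2 + b*x1*x2^2*y2 + a*x2*y2^2 + (-1)*a*x2*y1*y2^2 + a*x2^2*y2 + (-1)*a*x2^2*y1*y2 + a*x1*y2^3 + a*x1*x2*y2^2)
      hN (by ring) (by ring) (by ring) (by ring) hN'
  exact Prod.ext (Prod.ext h1 h2) (Prod.ext h3 h4)
end

section
/- The map R_{α,β} ((u₁′,u₂′,v₁′,v₂′) as in the previous statement) satisfies the Lax equation L₁(u₁′,u₂′;α,ζ)L₁(v₁′,v₂′;β,ζ) = L₁(y₁,y₂;β,ζ)L₁(x₁,x₂;α,ζ) for all ζ, with L₁(x₁,x₂;α,ζ) = [[x₁−ζ, x₂],[−(α+(x₁−1)x₁)/x₂, 1−x₁−ζ]]. -/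
open Matrix

/-- The Lax matrix `L₁(x₁,x₂;α,ζ)`. -/
noncomputable def L1mat (x₁ x₂ a ζ : ℂ) : Matrix (Fin 2) (Fin 2) ℂ :=
  !![x₁ - ζ, x₂; -(a + (x₁ - 1) * x₁) / x₂, 1 - x₁ - ζ]

private theorem mat2_ext (e f g h e' f' g' h' : ℂ) (h1 : e = e') (h2 : f = f')
    (h3 : g = g') (h4 : h = h') : !![e, f; g, h] = !![e', f'; g', h'] := by
  subst h1 h2 h3 h4; rfl

set_option maxHeartbeats 1600000 in
theorem stmt16 (a b x₁ x₂ y₁ y₂ : ℂ) (hx₂ : x₂ ≠ 0) (hy₂ : y₂ ≠ 0)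
    (hN : a * y₂ ^ 2 + b * x₂ ^ 2 + (a + b - 1) * y₂ * x₂ +
        (x₂ * y₁ - x₁ * y₂) * (x₂ * y₁ - x₁ * y₂ + y₂ - x₂) ≠ 0) :
    let N := a * y₂ ^ 2 + b * x₂ ^ 2 + (a + b - 1) * y₂ * x₂ +
      (x₂ * y₁ - x₁ * y₂) * (x₂ * y₁ - x₁ * y₂ + y₂ - x₂)
    let u₁ := y₁ + x₂ * y₂ * (a - b) * (x₁ + y₁ - 1) / N
    let u₂ := y₂ / N * (a * (x₂ + y₂) ^ 2 +
      (x₂ * (y₁ - 1) - x₁ * y₂) * (x₂ * y₁ - x₁ * y₂ + y₂))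
    let v₁ := x₁ - x₂ * y₂ * (a - b) * (x₁ + y₁ - 1) / N
    let v₂ := x₂ / N * (b * (x₂ + y₂) ^ 2 +
      (x₂ * (y₁ - 1) - x₁ * y₂) * (x₂ * y₁ - x₁ * y₂ + y₂))
    u₂ ≠ 0 → v₂ ≠ 0 →
      ∀ ζ : ℂ, L1mat u₁ u₂ a ζ * L1mat v₁ v₂ b ζ =
        L1mat y₁ y₂ b ζ * L1mat x₁ x₂ a ζ := by
  intro N u₁ u₂ v₁ v₂ hu₂ hv₂ ζ
  have hN' : N ≠ 0 := hN
  have hNdef : N = a * y₂ ^ 2 + b * x₂ ^ 2 + (a + b - 1) * y₂ * x₂ +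
      (x₂ * y₁ - x₁ * y₂) * (x₂ * y₁ - x₁ * y₂ + y₂ - x₂) := rfl
  have hu1 : u₁ = y₁ + x₂ * y₂ * (a - b) * (x₁ + y₁ - 1) / N := rfl
  have hu2 : u₂ = y₂ / N * (a * (x₂ + y₂) ^ 2 + (x₂ * (y₁ - 1) - x₁ * y₂) * (x₂ * y₁ - x₁ * y₂ + y₂)) := rfl
  have hv1 : v₁ = x₁ - x₂ * y₂ * (a - b) * (x₁ + y₁ - 1) / N := rfl
  have hv2 : v₂ = x₂ / N * (b * (x₂ + y₂) ^ 2 + (x₂ * (y₁ - 1) - x₁ * y₂) * (x₂ * y₁ - x₁ * y₂ + y₂)) := rfl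
  clear_value N u₁ u₂ v₁ v₂
  clear hN
  have hu1' : u₁ * N = (y₁ * N + x₂ * y₂ * (a - b) * (x₁ + y₁ - 1)) := by
    rw [hu1]; field_simp [hN']
  have hu2' : u₂ * N = y₂ * (a * (x₂ + y₂) ^ 2 + (x₂ * (y₁ - 1) - x₁ * y₂) * (x₂ * y₁ - x₁ * y₂ + y₂)) := by
    rw [hu2]; field_simp [hN']
  have hv1' : v₁ * N = (x₁ * N - x₂ * y₂ * (a - b) * (x₁ + y₁ - 1)) := by
    rw [hv1]; field_simp [hN']
  have hv2' : v₂ * N = x₂ * (b * (x₂ + y₂) ^ 2 + (x₂ * (y₁ - 1) - x₁ * y₂) * (x₂ * y₁ - x₁ * y₂ + y₂)) := by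
    rw [hv2]; field_simp [hN']
  have eu1 : u₁ = (y₁ * N + x₂ * y₂ * (a - b) * (x₁ + y₁ - 1)) / N := by rw [eq_div_iff hN']; exact hu1'
  have ev1 : v₁ = (x₁ * N - x₂ * y₂ * (a - b) * (x₁ + y₁ - 1)) / N := by rw [eq_div_iff hN']; exact hv1'
  have eu2 : u₂ = y₂ * (a * (x₂ + y₂) ^ 2 + (x₂ * (y₁ - 1) - x₁ * y₂) * (x₂ * y₁ - x₁ * y₂ + y₂)) / N := by rw [eq_div_iff hN']; exact hu2'
  have ev2 : v₂ = x₂ * (b * (x₂ + y₂) ^ 2 + (x₂ * (y₁ - 1) - x₁ * y₂) * (x₂ * y₁ - x₁ * y₂ + y₂)) / N := by rw [eq_div_iff hN']; exact hv2'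
  have key1 : a * N ^ 2 + (y₁ * N + x₂ * y₂ * (a - b) * (x₁ + y₁ - 1)) * ((y₁ - 1) * N + x₂ * y₂ * (a - b) * (x₁ + y₁ - 1)) =
      (a * (x₂ + y₂) ^ 2 + (x₂ * (y₁ - 1) - x₁ * y₂) * (x₂ * y₁ - x₁ * y₂ + y₂)) * (a^2*y₂^2 + 2*a*b*x₂*y₂ + a*x₁^2*y₂^2 - a*x₁*y₂^2 + 2*a*x₂*y₁^2*y₂ - 2*a*x₂*y₁*y₂ + a*y₁^2*y₂^2 - a*y₁*y₂^2 + b^2*x₂^2 - 2*b*x₁*x₂*y₁*y₂ + b*x₁*x₂*y₂ + 2*b*x₂^2*y₁^2 - 2*b*x₂^2*y₁ + b*x₂*y₁*y₂ - b*x₂*y₂ + x₁^2*y₁^2*y₂^2 - x₁^2*y₁*y₂^2 - 2*x₁*x₂*y₁^3*y₂ + 3*x₁*x₂*y₁^2*y₂ - x₁*x₂*y₁*y₂ - x₁*y₁^2*y₂^2 + x₁*y₁*y₂^2 + x₂^2*y₁^4 - 2*x₂^2*y₁^3 + x₂^2*y₁^2 + x₂*y₁^3*y₂ - 2*x₂*y₁^2*y₂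 + x₂*y₁*y₂) := by rw [hNdef]; ring
  have key2 : b * N ^ 2 + (x₁ * N - x₂ * y₂ * (a - b) * (x₁ + y₁ - 1)) * ((x₁ - 1) * N - x₂ * y₂ * (a - b) * (x₁ + y₁ - 1)) =
      (b * (x₂ + y₂) ^ 2 + (x₂ * (y₁ - 1) - x₁ * y₂) * (x₂ * y₁ - x₁ * y₂ + y₂)) * (a^2*y₂^2 + 2*a*b*x₂*y₂ + 2*a*x₁^2*y₂^2 - 2*a*x₁*x₂*y₁*y₂ + a*x₁*x₂*y₂ - 2*a*x₁*y₂^2 + a*x₂*y₁*y₂ - a*x₂*y₂ + b^2*x₂^2 + b*x₁^2*x₂^2 + 2*b*x₁^2*x₂*y₂ - b*x₁*x₂^2 - 2*b*x₁*x₂*y₂ + b*x₂^2*y₁^2 - b*x₂^2*y₁ + x₁^4*y₂^2 - 2*x₁^3*x₂*y₁*y₂ + x₁^3*x₂*y₂ - 2*x₁^3*y₂^2 + x₁^2*x₂^2*y₁^2 - x₁^2*x₂^2*y₁ + 3*x₁^2*x₂*y₁*y₂ - 2*x₁^2*x₂*y₂ + x₁^2*y₂^2 - x₁*x₂^2*y₁^2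 + x₁*x₂^2*y₁ - x₁*x₂*y₁*y₂ + x₁*x₂*y₂) := by rw [hNdef]; ring
  have P1 : (a + (u₁ - 1) * u₁) * N ^ 2 = (a * (x₂ + y₂) ^ 2 + (x₂ * (y₁ - 1) - x₁ * y₂) * (x₂ * y₁ - x₁ * y₂ + y₂)) * (a^2*y₂^2 + 2*a*b*x₂*y₂ + a*x₁^2*y₂^2 - a*x₁*y₂^2 + 2*a*x₂*y₁^2*y₂ - 2*a*x₂*y₁*y₂ + a*y₁^2*y₂^2 - a*y₁*y₂^2 + b^2*x₂^2 - 2*b*x₁*x₂*y₁*y₂ + b*x₁*x₂*y₂ + 2*b*x₂^2*y₁^2 - 2*b*x₂^2*y₁ + b*x₂*y₁*y₂ - b*x₂*y₂ + x₁^2*y₁^2*y₂^2 - x₁^2*y₁*y₂^2 - 2*x₁*x₂*y₁^3*y₂ + 3*x₁*x₂*y₁^2*y₂ - x₁*x₂*y₁*y₂ - x₁*y₁^2*y₂^2 + x₁*y₁*y₂^2 + x₂^2*y₁^4 - 2*x₂^2*y₁^3 + x₂^2*y₁^2 + x₂*y₁^3*y₂ - 2*x₂*y₁^2*y₂ + x₂*y₁*y₂)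 := by
    linear_combination (u₁ * N + y₁ * N + x₂ * y₂ * (a - b) * (x₁ + y₁ - 1) - N) * hu1' + key1
  have P2 : (b + (v₁ - 1) * v₁) * N ^ 2 = (b * (x₂ + y₂) ^ 2 + (x₂ * (y₁ - 1) - x₁ * y₂) * (x₂ * y₁ - x₁ * y₂ + y₂)) * (a^2*y₂^2 + 2*a*b*x₂*y₂ + 2*a*x₁^2*y₂^2 - 2*a*x₁*x₂*y₁*y₂ + a*x₁*x₂*y₂ - 2*a*x₁*y₂^2 + a*x₂*y₁*y₂ - a*x₂*y₂ + b^2*x₂^2 + b*x₁^2*x₂^2 + 2*b*x₁^2*x₂*y₂ - b*x₁*x₂^2 - 2*b*x₁*x₂*y₂ + b*x₂^2*y₁^2 - b*x₂^2*y₁ + x₁^4*y₂^2 - 2*x₁^3*x₂*y₁*y₂ + x₁^3*x₂*y₂ - 2*x₁^3*y₂^2 + x₁^2*x₂^2*y₁^2 - x₁^2*x₂^2*y₁ + 3*x₁^2*x₂*y₁*y₂ - 2*x₁^2*x₂*y₂ + x₁^2*y₂^2 - x₁*x₂^2*y₁^2 + x₁*x₂^2*y₁ - x₁*x₂*y₁*y₂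 + x₁*x₂*y₂) := by
    linear_combination (v₁ * N + x₁ * N - (x₂ * y₂ * (a - b) * (x₁ + y₁ - 1)) - N) * hv1' + key2
  have e1 : (a + (u₁ - 1) * u₁) / u₂ = (a^2*y₂^2 + 2*a*b*x₂*y₂ + a*x₁^2*y₂^2 - a*x₁*y₂^2 + 2*a*x₂*y₁^2*y₂ - 2*a*x₂*y₁*y₂ + a*y₁^2*y₂^2 - a*y₁*y₂^2 + b^2*x₂^2 - 2*b*x₁*x₂*y₁*y₂ + b*x₁*x₂*y₂ + 2*b*x₂^2*y₁^2 - 2*b*x₂^2*y₁ + b*x₂*y₁*y₂ - b*x₂*y₂ + x₁^2*y₁^2*y₂^2 - x₁^2*y₁*y₂^2 - 2*x₁*x₂*y₁^3*y₂ + 3*x₁*x₂*y₁^2*y₂ - x₁*x₂*y₁*y₂ - x₁*y₁^2*y₂^2 + x₁*y₁*y₂^2 + x₂^2*y₁^4 - 2*x₂^2*y₁^3 + x₂^2*y₁^2 + x₂*y₁^3*y₂ - 2*x₂*y₁^2*y₂ + x₂*y₁*y₂) / (N * y₂) := by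
    rw [div_eq_div_iff hu₂ (mul_ne_zero hN' hy₂)]
    apply mul_left_cancel₀ hN'
    linear_combination y₂ * P1 - (a^2*y₂^2 + 2*a*b*x₂*y₂ + a*x₁^2*y₂^2 - a*x₁*y₂^2 + 2*a*x₂*y₁^2*y₂ - 2*a*x₂*y₁*y₂ + a*y₁^2*y₂^2 - a*y₁*y₂^2 + b^2*x₂^2 - 2*b*x₁*x₂*y₁*y₂ + b*x₁*x₂*y₂ + 2*b*x₂^2*y₁^2 - 2*b*x₂^2*y₁ + b*x₂*y₁*y₂ - b*x₂*y₂ + x₁^2*y₁^2*y₂^2 - x₁^2*y₁*y₂^2 - 2*x₁*x₂*y₁^3*y₂ + 3*x₁*x₂*y₁^2*y₂ - x₁*x₂*y₁*y₂ - x₁*y₁^2*y₂^2 + x₁*y₁*y₂^2 + x₂^2*y₁^4 - 2*x₂^2*y₁^3 + x₂^2*y₁^2 + x₂*y₁^3*y₂ - 2*x₂*y₁^2*y₂ + x₂*y₁*y₂) * hu2'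
  have e2 : (b + (v₁ - 1) * v₁) / v₂ = (a^2*y₂^2 + 2*a*b*x₂*y₂ + 2*a*x₁^2*y₂^2 - 2*a*x₁*x₂*y₁*y₂ + a*x₁*x₂*y₂ - 2*a*x₁*y₂^2 + a*x₂*y₁*y₂ - a*x₂*y₂ + b^2*x₂^2 + b*x₁^2*x₂^2 + 2*b*x₁^2*x₂*y₂ - b*x₁*x₂^2 - 2*b*x₁*x₂*y₂ + b*x₂^2*y₁^2 - b*x₂^2*y₁ + x₁^4*y₂^2 - 2*x₁^3*x₂*y₁*y₂ + x₁^3*x₂*y₂ - 2*x₁^3*y₂^2 + x₁^2*x₂^2*y₁^2 - x₁^2*x₂^2*y₁ + 3*x₁^2*x₂*y₁*y₂ - 2*x₁^2*x₂*y₂ + x₁^2*y₂^2 - x₁*x₂^2*y₁^2 + x₁*x₂^2*y₁ - x₁*x₂*y₁*y₂ + x₁*x₂*y₂) / (N * x₂) := by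
    rw [div_eq_div_iff hv₂ (mul_ne_zero hN' hx₂)]
    apply mul_left_cancel₀ hN'
    linear_combination x₂ * P2 - (a^2*y₂^2 + 2*a*b*x₂*y₂ + 2*a*x₁^2*y₂^2 - 2*a*x₁*x₂*y₁*y₂ + a*x₁*x₂*y₂ - 2*a*x₁*y₂^2 + a*x₂*y₁*y₂ - a*x₂*y₂ + b^2*x₂^2 + b*x₁^2*x₂^2 + 2*b*x₁^2*x₂*y₂ - b*x₁*x₂^2 - 2*b*x₁*x₂*y₂ + b*x₂^2*y₁^2 - b*x₂^2*y₁ + x₁^4*y₂^2 - 2*x₁^3*x₂*y₁*y₂ + x₁^3*x₂*y₂ - 2*x₁^3*y₂^2 + x₁^2*x₂^2*y₁^2 - x₁^2*x₂^2*y₁ + 3*x₁^2*x₂*y₁*y₂ - 2*x₁^2*x₂*y₂ + x₁^2*y₂^2 - x₁*x₂^2*y₁^2 + x₁*x₂^2*y₁ - x₁*x₂*y₁*y₂ + x₁*x₂*y₂) * hv2'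
  have k2 : y₂ * (a * (x₂ + y₂) ^ 2 + (x₂ * (y₁ - 1) - x₁ * y₂) * (x₂ * y₁ - x₁ * y₂ + y₂)) + x₂ * (b * (x₂ + y₂) ^ 2 + (x₂ * (y₁ - 1) - x₁ * y₂) * (x₂ * y₁ - x₁ * y₂ + y₂)) = (x₂ + y₂) * N := by rw [hNdef]; ring
  have k3 : x₂ * (a^2*y₂^2 + 2*a*b*x₂*y₂ + a*x₁^2*y₂^2 - a*x₁*y₂^2 + 2*a*x₂*y₁^2*y₂ - 2*a*x₂*y₁*y₂ + a*y₁^2*y₂^2 - a*y₁*y₂^2 + b^2*x₂^2 - 2*b*x₁*x₂*y₁*y₂ + b*x₁*x₂*y₂ + 2*b*x₂^2*y₁^2 - 2*b*x₂^2*y₁ + b*x₂*y₁*y₂ - b*x₂*y₂ + x₁^2*y₁^2*y₂^2 - x₁^2*y₁*y₂^2 - 2*x₁*x₂*y₁^3*y₂ + 3*x₁*x₂*y₁^2*y₂ - x₁*x₂*y₁*y₂ - x₁*y₁^2*y₂^2 + x₁*y₁*y₂^2 + x₂^2*y₁^4 - 2*x₂^2*y₁^3 + x₂^2*y₁^2 +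 x₂*y₁^3*y₂ - 2*x₂*y₁^2*y₂ + x₂*y₁*y₂) + y₂ * (a^2*y₂^2 + 2*a*b*x₂*y₂ + 2*a*x₁^2*y₂^2 - 2*a*x₁*x₂*y₁*y₂ + a*x₁*x₂*y₂ - 2*a*x₁*y₂^2 + a*x₂*y₁*y₂ - a*x₂*y₂ + b^2*x₂^2 + b*x₁^2*x₂^2 + 2*b*x₁^2*x₂*y₂ - b*x₁*x₂^2 - 2*b*x₁*x₂*y₂ + b*x₂^2*y₁^2 - b*x₂^2*y₁ + x₁^4*y₂^2 - 2*x₁^3*x₂*y₁*y₂ + x₁^3*x₂*y₂ - 2*x₁^3*y₂^2 + x₁^2*x₂^2*y₁^2 - x₁^2*x₂^2*y₁ + 3*x₁^2*x₂*y₁*y₂ - 2*x₁^2*x₂*y₂ + x₁^2*y₂^2 - x₁*x₂^2*y₁^2 + x₁*x₂^2*y₁ - x₁*x₂*y₁*y₂ + x₁*x₂*y₂) = N * ((b + (y₁ - 1) * y₁) * x₂ + y₂ * (a + (x₁ - 1) * x₁)) := by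
    rw [hNdef]; ring
  have k4 : (y₁ * N + x₂ * y₂ * (a - b) * (x₁ + y₁ - 1)) * (x₂ * (b * (x₂ + y₂) ^ 2 + (x₂ * (y₁ - 1) - x₁ * y₂) * (x₂ * y₁ - x₁ * y₂ + y₂))) + y₂ * (a * (x₂ + y₂) ^ 2 + (x₂ * (y₁ - 1) - x₁ * y₂) * (x₂ * y₁ - x₁ * y₂ + y₂)) * (N - (x₁ * N - x₂ * y₂ * (a - b) * (x₁ + y₁ - 1))) =
      (y₁ * x₂ + y₂ * (1 - x₁)) * (N * N) := by rw [hNdef]; ring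
  have k5 : (y₁ * N + x₂ * y₂ * (a - b) * (x₁ + y₁ - 1)) * (x₁ * N - x₂ * y₂ * (a - b) * (x₁ + y₁ - 1)) * x₂ - y₂ * (a * (x₂ + y₂) ^ 2 + (x₂ * (y₁ - 1) - x₁ * y₂) * (x₂ * y₁ - x₁ * y₂ + y₂)) * (a^2*y₂^2 + 2*a*b*x₂*y₂ + 2*a*x₁^2*y₂^2 - 2*a*x₁*x₂*y₁*y₂ + a*x₁*x₂*y₂ - 2*a*x₁*y₂^2 + a*x₂*y₁*y₂ - a*x₂*y₂ + b^2*x₂^2 + b*x₁^2*x₂^2 + 2*b*x₁^2*x₂*y₂ - b*x₁*x₂^2 - 2*b*x₁*x₂*y₂ + b*x₂^2*y₁^2 - b*x₂^2*y₁ + x₁^4*y₂^2 - 2*x₁^3*x₂*y₁*y₂ + x₁^3*x₂*y₂ - 2*x₁^3*y₂^2 + x₁^2*x₂^2*y₁^2 - x₁^2*x₂^2*y₁ + 3*x₁^2*x₂*y₁*y₂ - 2*x₁^2*x₂*y₂ + x₁^2*y₂^2 - x₁*x₂^2*y₁^2 + x₁*x₂^2*y₁ - x₁*x₂*y₁*y₂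 + x₁*x₂*y₂) =
      N ^ 2 * (y₁ * x₁ * x₂ - y₂ * (a + (x₁ - 1) * x₁)) := by rw [hNdef]; ring
  have k6 : (a^2*y₂^2 + 2*a*b*x₂*y₂ + a*x₁^2*y₂^2 - a*x₁*y₂^2 + 2*a*x₂*y₁^2*y₂ - 2*a*x₂*y₁*y₂ + a*y₁^2*y₂^2 - a*y₁*y₂^2 + b^2*x₂^2 - 2*b*x₁*x₂*y₁*y₂ + b*x₁*x₂*y₂ + 2*b*x₂^2*y₁^2 - 2*b*x₂^2*y₁ + b*x₂*y₁*y₂ - b*x₂*y₂ + x₁^2*y₁^2*y₂^2 - x₁^2*y₁*y₂^2 - 2*x₁*x₂*y₁^3*y₂ + 3*x₁*x₂*y₁^2*y₂ - x₁*x₂*y₁*y₂ - x₁*y₁^2*y₂^2 + x₁*y₁*y₂^2 + x₂^2*y₁^4 - 2*x₂^2*y₁^3 + x₂^2*y₁^2 + x₂*y₁^3*y₂ - 2*x₂*y₁^2*y₂ + x₂*y₁*y₂) * (x₁ * N - x₂ * y₂ * (a - b) * (x₁ + y₁ - 1)) * x₂ + y₂ * ((N - (y₁ * N + x₂ * y₂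 * (a - b) * (x₁ + y₁ - 1))) * (a^2*y₂^2 + 2*a*b*x₂*y₂ + 2*a*x₁^2*y₂^2 - 2*a*x₁*x₂*y₁*y₂ + a*x₁*x₂*y₂ - 2*a*x₁*y₂^2 + a*x₂*y₁*y₂ - a*x₂*y₂ + b^2*x₂^2 + b*x₁^2*x₂^2 + 2*b*x₁^2*x₂*y₂ - b*x₁*x₂^2 - 2*b*x₁*x₂*y₂ + b*x₂^2*y₁^2 - b*x₂^2*y₁ + x₁^4*y₂^2 - 2*x₁^3*x₂*y₁*y₂ + x₁^3*x₂*y₂ - 2*x₁^3*y₂^2 + x₁^2*x₂^2*y₁^2 - x₁^2*x₂^2*y₁ + 3*x₁^2*x₂*y₁*y₂ - 2*x₁^2*x₂*y₂ + x₁^2*y₂^2 - x₁*x₂^2*y₁^2 + x₁*x₂^2*y₁ - x₁*x₂*y₁*y₂ + x₁*x₂*y₂)) =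
      N ^ 2 * ((b + (y₁ - 1) * y₁) * x₁ * x₂ + y₂ * ((1 - y₁) * (a + (x₁ - 1) * x₁))) := by rw [hNdef]; ring
  have k7 : (a^2*y₂^2 + 2*a*b*x₂*y₂ + a*x₁^2*y₂^2 - a*x₁*y₂^2 + 2*a*x₂*y₁^2*y₂ - 2*a*x₂*y₁*y₂ + a*y₁^2*y₂^2 - a*y₁*y₂^2 + b^2*x₂^2 - 2*b*x₁*x₂*y₁*y₂ + b*x₁*x₂*y₂ + 2*b*x₂^2*y₁^2 - 2*b*x₂^2*y₁ + b*x₂*y₁*y₂ - b*x₂*y₂ + x₁^2*y₁^2*y₂^2 - x₁^2*y₁*y₂^2 - 2*x₁*x₂*y₁^3*y₂ + 3*x₁*x₂*y₁^2*y₂ - x₁*x₂*y₁*y₂ - x₁*y₁^2*y₂^2 + x₁*y₁*y₂^2 + x₂^2*y₁^4 - 2*x₂^2*y₁^3 + x₂^2*y₁^2 + x₂*y₁^3*y₂ - 2*x₂*y₁^2*y₂ + x₂*y₁*y₂) * (x₂ * (b * (x₂ + y₂) ^ 2 + (x₂ * (y₁ - 1) - x₁ * y₂) * (x₂ * y₁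 - x₁ * y₂ + y₂))) - y₂ * ((N - (y₁ * N + x₂ * y₂ * (a - b) * (x₁ + y₁ - 1))) * (N - (x₁ * N - x₂ * y₂ * (a - b) * (x₁ + y₁ - 1)))) =
      N ^ 2 * ((b + (y₁ - 1) * y₁) * x₂ - y₂ * ((1 - y₁) * (1 - x₁))) := by rw [hNdef]; ring
  have hR1 : u₁ + v₁ = x₁ + y₁ := by
    rw [eu1, ev1, ← add_div, div_eq_iff hN']; ring
  have hR2 : u₂ + v₂ = x₂ + y₂ := by
    rw [eu2, ev2, ← add_div, div_eq_iff hN']; linear_combination k2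
  have hF2 : u₁ * v₂ + u₂ * (1 - v₁) = y₁ * x₂ + y₂ * (1 - x₁) := by
    rw [eu1, ev1, eu2, ev2, div_mul_div_comm, one_sub_div hN', div_mul_div_comm,
      ← add_div, div_eq_iff (mul_ne_zero hN' hN')]
    linear_combination k4
  have hF3 : (a + (u₁ - 1) * u₁) / u₂ + (b + (v₁ - 1) * v₁) / v₂ =
      (b + (y₁ - 1) * y₁) / y₂ + (a + (x₁ - 1) * x₁) / x₂ := by
    rw [e1, e2, div_add_div _ _ (mul_ne_zero hN' hy₂) (mul_ne_zero hN' hx₂),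
      div_add_div _ _ hy₂ hx₂,
      div_eq_div_iff (mul_ne_zero (mul_ne_zero hN' hy₂) (mul_ne_zero hN' hx₂))
        (mul_ne_zero hy₂ hx₂)]
    linear_combination (N * y₂ * x₂) * k3
  have hF1 : u₁ * v₁ - u₂ * ((b + (v₁ - 1) * v₁) / v₂) =
      y₁ * x₁ - y₂ * ((a + (x₁ - 1) * x₁) / x₂) := by
    rw [e2, eu1, ev1, eu2, div_mul_div_comm, div_mul_div_comm,
      div_sub_div _ _ (mul_ne_zero hN' hN') (mul_ne_zero hN' (mul_ne_zero hN' hx₂)),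
      mul_div_assoc', sub_div' hx₂,
      div_eq_div_iff (mul_ne_zero (mul_ne_zero hN' hN')
        (mul_ne_zero hN' (mul_ne_zero hN' hx₂))) hx₂]
    linear_combination (N ^ 2 * x₂) * k5
  have hF4 : ((a + (u₁ - 1) * u₁) / u₂) * v₁ + (1 - u₁) * ((b + (v₁ - 1) * v₁) / v₂) =
      ((b + (y₁ - 1) * y₁) / y₂) * x₁ + (1 - y₁) * ((a + (x₁ - 1) * x₁) / x₂) := by
    rw [e1, e2, eu1, ev1, div_mul_div_comm, one_sub_div hN', div_mul_div_comm,
      div_add_div _ _ (mul_ne_zero (mul_ne_zero hN' hy₂) hN')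
        (mul_ne_zero hN' (mul_ne_zero hN' hx₂)),
      div_mul_eq_mul_div, mul_div_assoc', div_add_div _ _ hy₂ hx₂,
      div_eq_div_iff (mul_ne_zero (mul_ne_zero (mul_ne_zero hN' hy₂) hN')
        (mul_ne_zero hN' (mul_ne_zero hN' hx₂))) (mul_ne_zero hy₂ hx₂)]
    linear_combination (N ^ 2 * y₂ * x₂) * k6
  have hF5 : ((a + (u₁ - 1) * u₁) / u₂) * v₂ - (1 - u₁) * (1 - v₁) =
      ((b + (y₁ - 1) * y₁) / y₂) * x₂ - (1 - y₁) * (1 - x₁) := by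
    rw [e1, eu1, ev1, ev2, div_mul_div_comm, one_sub_div hN', one_sub_div hN',
      div_mul_div_comm,
      div_sub_div _ _ (mul_ne_zero (mul_ne_zero hN' hy₂) hN') (mul_ne_zero hN' hN'),
      div_mul_eq_mul_div, div_sub' hy₂,
      div_eq_div_iff (mul_ne_zero (mul_ne_zero (mul_ne_zero hN' hy₂) hN')
        (mul_ne_zero hN' hN')) hy₂]
    linear_combination (N ^ 2 * y₂) * k7
  clear hu1 hu2 hv1 hv2 hu1' hu2' hv1' hv2' key1 key2 P1 P2 e1 e2 eu1 ev1 eu2 ev2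
  clear k2 k3 k4 k5 k6 k7 hNdef
  simp only [L1mat]
  rw [Matrix.mul_fin_two, Matrix.mul_fin_two]
  apply mat2_ext
  · linear_combination hF1 - ζ * hR1
  · linear_combination hF2 - ζ * hR2
  · linear_combination ζ * hF3 - hF4
  · linear_combination ζ * hR1 - hF5
end
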